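/- arXiv:1009.4535 — 2 statements merged into one kernel-verified Lean document; each statement's English description precedes it below -/
import Mathlib

section
/- For all integers n and k with 1 ≤ k ≤ (n-1)/2, the number of partial matchings of [n-1] with exactly k arcs that avoid both neighbor alignments and left nestings equals the Stirling number of the second kind S(n-k, n-2k), i.e. Q(n-1,k) = S(n-k, n-2k). -/
open Finset

/-- `(i, j)` is an arc of the linear representation of the set partition `P` of
`{1, ..., n}`: `i < j`, both lie in the same block, and no element of that block
lies strictly between them. -/
def IsArc {n : ℕ} (P : Finpartition (Finset.Icc 1 n)) (a : ℕ × ℕ) : Prop :=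
  a.1 < a.2 ∧ ∃ B ∈ P.parts, a.1 ∈ B ∧ a.2 ∈ B ∧ ∀ c ∈ B, ¬ (a.1 < c ∧ c < a.2)

/-- The number of arcs of a set partition. -/
noncomputable def numArcs {n : ℕ} (P : Finpartition (Finset.Icc 1 n)) : ℕ :=
  {a : ℕ × ℕ | IsArc P a}.ncard

/-- A partial matching: every block has at most two elements. -/
def IsMatching {n : ℕ} (P : Finpartition (Finset.Icc 1 n)) : Prop :=
  ∀ B ∈ P.parts, B.card ≤ 2

/-- A neighbor alignment: arcs `(i₁, j₁)`, `(i₂, j₂)` with `i₁ < j₁ < i₂ < j₂`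
and `j₁ + 1 = i₂`. -/
def HasNbrAlign {n : ℕ} (P : Finpartition (Finset.Icc 1 n)) : Prop :=
  ∃ a b : ℕ × ℕ, IsArc P a ∧ IsArc P b ∧ a.2 + 1 = b.1

/-- A left nesting: arcs `(i₁, j₁)`, `(i₂, j₂)` with `i₁ < i₂ < j₂ < j₁`
and `i₁ + 1 = i₂`. -/
def HasLeftNesting {n : ℕ} (P : Finpartition (Finset.Icc 1 n)) : Prop :=
  ∃ a b : ℕ × ℕ, IsArc P a ∧ IsArc P b ∧ a.1 + 1 = b.1 ∧ b.2 < a.2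

/-- A right nesting: arcs `(i₁, j₁)`, `(i₂, j₂)` with `i₁ < i₂ < j₂ < j₁`
and `j₂ + 1 = j₁`. -/
def HasRightNesting {n : ℕ} (P : Finpartition (Finset.Icc 1 n)) : Prop :=
  ∃ a b : ℕ × ℕ, IsArc P a ∧ IsArc P b ∧ a.1 < b.1 ∧ b.2 + 1 = a.2

/-- The number of left crossings: pairs of arcs `(i₁, j₁)`, `(i₂, j₂)` with
`i₁ < i₂ < j₁ < j₂` and `i₁ + 1 = i₂`. -/
noncomputable def numLeftCrossings {n : ℕ} (P : Finpartition (Finset.Icc 1 n)) : ℕ :=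
  {p : (ℕ × ℕ) × (ℕ × ℕ) |
    IsArc P p.1 ∧ IsArc P p.2 ∧ p.1.1 + 1 = p.2.1 ∧ p.2.1 < p.1.2 ∧ p.1.2 < p.2.2}.ncard

/-- The number of transients: elements of a block that are neither the minimum
nor the maximum of their block. -/
noncomputable def numTransients {n : ℕ} (P : Finpartition (Finset.Icc 1 n)) : ℕ :=
  {x : ℕ | ∃ B ∈ P.parts, x ∈ B ∧ (∃ y ∈ B, y < x) ∧ (∃ y ∈ B, x < y)}.ncard

/-- `Pnum n k`: the number of partial matchings of `[n]` with exactly `k` arcs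
and no neighbor alignments. -/
noncomputable def Pnum (n k : ℕ) : ℕ :=
  {P : Finpartition (Finset.Icc 1 n) |
    IsMatching P ∧ numArcs P = k ∧ ¬ HasNbrAlign P}.ncard

/-- `Qnum n k`: the number of partial matchings of `[n]` with exactly `k` arcs,
no neighbor alignments and no left nestings. -/
noncomputable def Qnum (n k : ℕ) : ℕ :=
  {P : Finpartition (Finset.Icc 1 n) |
    IsMatching P ∧ numArcs P = k ∧ ¬ HasNbrAlign P ∧ ¬ HasLeftNesting P}.ncard

/-- `Rnum n k`: the number of partial matchings of `[n]` with exactly `k` arcs,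
no neighbor alignments, no left nestings and no right nestings. -/
noncomputable def Rnum (n k : ℕ) : ℕ :=
  {P : Finpartition (Finset.Icc 1 n) |
    IsMatching P ∧ numArcs P = k ∧ ¬ HasNbrAlign P ∧ ¬ HasLeftNesting P ∧
      ¬ HasRightNesting P}.ncard

/-- `Tnum n k`: the number of set partitions of `[n]` with exactly `k` arcs and
no right nestings. -/
noncomputable def Tnum (n k : ℕ) : ℕ :=
  {P : Finpartition (Finset.Icc 1 n) | numArcs P = k ∧ ¬ HasRightNesting P}.ncard

/-- `Stirling m b`: the Stirling number of the second kind, the number of set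
partitions of `{1, ..., m}` into `b` blocks. -/
noncomputable def Stirling (m b : ℕ) : ℕ :=
  {P : Finpartition (Finset.Icc 1 m) | P.parts.card = b}.ncard

namespace St4

/-- Partition of `s` into fibers of `f`. -/
def ofFibers (s : Finset ℕ) (f : ℕ → ℕ) : Finpartition s where
  parts := s.image (fun e => s.filter (fun x => f x = f e))
  supIndep := by
    rw [Finset.supIndep_iff_pairwiseDisjoint]
    intro t ht u hu htu
    simp only [coe_image, Set.mem_image, mem_coe] at ht hu
    obtain ⟨e, he, rfl⟩ := ht
    obtain ⟨e', he', rfl⟩ := hu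
    refine Finset.disjoint_left.2 fun x hx hx' => ?_
    simp only [id, mem_filter] at hx hx'
    exact htu (by rw [show f e = f e' from hx.2 ▸ hx'.2])
  sup_parts := by
    apply le_antisymm
    · refine Finset.sup_le fun t ht => ?_
      simp only [mem_image] at ht
      obtain ⟨e, _, rfl⟩ := ht
      exact Finset.filter_subset _ _
    · intro x hx
      rw [Finset.mem_sup]
      exact ⟨s.filter (fun y => f y = f x), mem_image_of_mem _ hx, by simp [hx]⟩
  bot_notMem := by
    simp only [bot_eq_empty, mem_image]
    rintro ⟨e, he, h⟩
    have : e ∈ s.filter (fun x => f x = f e) := by simp [he]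
    rw [h] at this
    simp at this

lemma mem_ofFibers_parts {s : Finset ℕ} {f : ℕ → ℕ} {B : Finset ℕ} :
    B ∈ (ofFibers s f).parts ↔ ∃ e ∈ s, B = s.filter (fun x => f x = f e) := by
  simp [ofFibers, eq_comm]

/-- The root map of an edge set: the left endpoint of the edge entering `x`, if any. -/
def rt (E : Finset (ℕ × ℕ)) (x : ℕ) : ℕ :=
  if h : (E.filter (fun a => a.2 = x)).Nonempty
  then ((E.filter (fun a => a.2 = x)).image Prod.fst).min' (h.image _)
  else x

lemma rt_cases (E : Finset (ℕ × ℕ)) (x : ℕ) :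
    rt E x = x ∨ ∃ a ∈ E, a.2 = x ∧ rt E x = a.1 := by
  unfold rt
  split_ifs with h
  · right
    have hm := Finset.min'_mem ((E.filter (fun a => a.2 = x)).image Prod.fst) (h.image _)
    simp only [mem_image, mem_filter] at hm
    obtain ⟨a, ⟨haE, hax⟩, ha1⟩ := hm
    exact ⟨a, haE, hax, ha1.symm⟩
  · left; rfl

lemma rt_of_not_right {E : Finset (ℕ × ℕ)} {x : ℕ} (h : ∀ a ∈ E, a.2 ≠ x) :
    rt E x = x := by
  unfold rt
  rw [dif_neg]
  simp only [Finset.not_nonempty_iff_eq_empty, Finset.filter_eq_empty_iff]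
  exact fun {a} ha => h a ha

lemma rt_snd {E : Finset (ℕ × ℕ)} (hr : ∀ a ∈ E, ∀ b ∈ E, a.2 = b.2 → a = b)
    {a : ℕ × ℕ} (ha : a ∈ E) : rt E a.2 = a.1 := by
  have hfil : E.filter (fun b => b.2 = a.2) = {a} := by
    ext b
    simp only [mem_filter, mem_singleton]
    constructor
    · rintro ⟨hb, hba⟩; exact hr b hb a ha hba
    · rintro rfl; exact ⟨ha, rfl⟩
  unfold rt
  rw [dif_pos (by rw [hfil]; exact ⟨a, mem_singleton_self a⟩)]
  congr 1 <;> simp [hfil]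


/-! ### Stage II : set partitions of `[1,m]` vs star edge sets -/

def Star (m : ℕ) (E : Finset (ℕ × ℕ)) : Prop :=
  (∀ a ∈ E, 1 ≤ a.1 ∧ a.1 < a.2 ∧ a.2 ≤ m) ∧
  (∀ a ∈ E, ∀ b ∈ E, a.2 = b.2 → a = b) ∧
  (∀ a ∈ E, ∀ b ∈ E, a.1 ≠ b.2)

lemma rt_le {m : ℕ} {E : Finset (ℕ × ℕ)} (h1 : ∀ a ∈ E, 1 ≤ a.1 ∧ a.1 < a.2 ∧ a.2 ≤ m)
    (x : ℕ) : rt E x ≤ x := by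
  rcases rt_cases E x with h | ⟨a, ha, ha2, ha1⟩
  · exact h.le
  · rw [ha1]; have := h1 a ha; omega

lemma rt_idem {E : Finset (ℕ × ℕ)} (h3 : ∀ a ∈ E, ∀ b ∈ E, a.1 ≠ b.2) (x : ℕ) :
    rt E (rt E x) = rt E x := by
  rcases rt_cases E x with h | ⟨a, ha, _, ha1⟩
  · rw [h]; exact h
  · rw [ha1]
    exact rt_of_not_right (fun b hb hb2 => h3 a ha b hb hb2.symm)

def toP (m : ℕ) (E : Finset (ℕ × ℕ)) : Finpartition (Finset.Icc 1 m) :=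
  ofFibers (Finset.Icc 1 m) (rt E)

def pt {m : ℕ} (P : Finpartition (Finset.Icc 1 m)) (x : ℕ) : Finset ℕ :=
  (P.parts.filter (fun B => x ∈ B)).sup id

noncomputable def mn {m : ℕ} (P : Finpartition (Finset.Icc 1 m)) (x : ℕ) : ℕ :=
  (insert x (pt P x)).min' (Finset.insert_nonempty _ _)

noncomputable def sig {m : ℕ} (P : Finpartition (Finset.Icc 1 m)) : Finset (ℕ × ℕ) :=
  ((Finset.Icc 1 m).filter (fun x => mn P x ≠ x)).image (fun x => (mn P x, x))

variable {m : ℕ} {P : Finpartition (Finset.Icc 1 m)}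

lemma pt_eq {B : Finset ℕ} (hB : B ∈ P.parts) {x : ℕ} (hx : x ∈ B) : pt P x = B := by
  have hxs : x ∈ Finset.Icc 1 m := P.le hB hx
  have huniq : ∀ C ∈ P.parts, x ∈ C → C = B := by
    intro C hC hxC
    obtain ⟨t, _, ht⟩ := P.existsUnique_mem hxs
    rw [ht C ⟨hC, hxC⟩, ht B ⟨hB, hx⟩]
  have : P.parts.filter (fun C => x ∈ C) = {B} := by
    ext C
    simp only [mem_filter, mem_singleton]
    exact ⟨fun ⟨h1, h2⟩ => huniq C h1 h2, fun h => h ▸ ⟨hB, hx⟩⟩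
  rw [pt, this]
  simp

lemma pt_mem_parts {x : ℕ} (hx : x ∈ Finset.Icc 1 m) : pt P x ∈ P.parts := by
  obtain ⟨B, hB, hxB⟩ := P.exists_mem hx
  rw [pt_eq hB hxB]; exact hB

lemma mem_pt {x : ℕ} (hx : x ∈ Finset.Icc 1 m) : x ∈ pt P x := by
  obtain ⟨B, hB, hxB⟩ := P.exists_mem hx
  rw [pt_eq hB hxB]; exact hxB

lemma mn_eq_min' {x : ℕ} (hx : x ∈ Finset.Icc 1 m) :
    mn P x = (pt P x).min' ⟨x, mem_pt hx⟩ := by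
  rw [mn]
  congr 1
  exact Finset.insert_eq_self.2 (mem_pt hx)

lemma mn_mem {x : ℕ} (hx : x ∈ Finset.Icc 1 m) : mn P x ∈ pt P x := by
  rw [mn_eq_min' hx]; exact Finset.min'_mem _ _

lemma mn_le {x : ℕ} (hx : x ∈ Finset.Icc 1 m) : ∀ y ∈ pt P x, mn P x ≤ y := by
  rw [mn_eq_min' hx]; exact fun y hy => Finset.min'_le _ y hy

lemma mn_le_self {x : ℕ} (hx : x ∈ Finset.Icc 1 m) : mn P x ≤ x :=
  mn_le hx x (mem_pt hx)

lemma pt_of_mem_pt {x y : ℕ} (hx : x ∈ Finset.Icc 1 m) (hy : y ∈ pt P x) :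
    pt P y = pt P x := pt_eq (pt_mem_parts hx) hy

lemma mn_of_mem_pt {x y : ℕ} (hx : x ∈ Finset.Icc 1 m) (hy : y ∈ pt P x) :
    mn P y = mn P x := by
  have hys : y ∈ Finset.Icc 1 m := P.le (pt_mem_parts hx) hy
  rw [mn_eq_min' hys, mn_eq_min' hx]
  congr 1
  exact pt_of_mem_pt hx hy

lemma mn_mem_Icc {x : ℕ} (hx : x ∈ Finset.Icc 1 m) : mn P x ∈ Finset.Icc 1 m :=
  P.le (pt_mem_parts hx) (mn_mem hx)

lemma mn_mn {x : ℕ} (hx : x ∈ Finset.Icc 1 m) : mn P (mn P x) = mn P x :=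
  mn_of_mem_pt hx (mn_mem hx)

lemma sig_star : Star m (sig P) := by
  refine ⟨?_, ?_, ?_⟩
  · rintro a ha
    simp only [sig, mem_image, mem_filter] at ha
    obtain ⟨x, ⟨hx, hne⟩, rfl⟩ := ha
    have h1 := mn_mem_Icc (P := P) hx
    have h2 := mn_le_self (P := P) hx
    simp only [Finset.mem_Icc] at hx h1 ⊢
    omega
  · rintro a ha b hb hab
    simp only [sig, mem_image, mem_filter] at ha hb
    obtain ⟨x, ⟨hx, _⟩, rfl⟩ := ha
    obtain ⟨y, ⟨hy, _⟩, rfl⟩ := hb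
    simp only at hab
    subst hab; rfl
  · rintro a ha b hb hab
    simp only [sig, mem_image, mem_filter] at ha hb
    obtain ⟨x, ⟨hx, _⟩, rfl⟩ := ha
    obtain ⟨y, ⟨hy, hney⟩, rfl⟩ := hb
    simp only at hab
    exact hney (by rw [← hab, mn_mn hx])

lemma rt_sig {x : ℕ} (hx : x ∈ Finset.Icc 1 m) : rt (sig P) x = mn P x := by
  by_cases h : mn P x = x
  · rw [h]
    apply rt_of_not_right
    rintro a ha
    simp only [sig, mem_image, mem_filter] at ha
    obtain ⟨y, ⟨hy, hney⟩, rfl⟩ := ha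
    simp only
    intro h2
    subst h2
    exact hney h
  · have ha : (mn P x, x) ∈ sig P := by
      simp only [sig, mem_image, mem_filter]
      exact ⟨x, ⟨hx, h⟩, rfl⟩
    exact rt_snd sig_star.2.1 ha

lemma toP_sig : toP m (sig P) = P := by
  apply Finpartition.ext
  rw [toP]
  ext B
  rw [mem_ofFibers_parts]
  constructor
  · rintro ⟨e, he, rfl⟩
    have hfib : (Finset.Icc 1 m).filter (fun x => rt (sig P) x = rt (sig P) e) = pt P e := by
      ext x
      simp only [mem_filter]
      constructor
      · rintro ⟨hx, hxe⟩
        rw [rt_sig hx, rt_sig he] at hxe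
        have h1 : mn P x ∈ pt P x := mn_mem hx
        have h2 : mn P e ∈ pt P e := mn_mem he
        rw [hxe] at h1
        have := pt_of_mem_pt he h2
        rw [← pt_of_mem_pt hx (hxe ▸ mn_mem hx)] at *
        -- pt P x = pt P (mn P e) = pt P e
        have hpe : pt P x = pt P e := by
          rw [← pt_of_mem_pt hx (show mn P e ∈ pt P x from hxe ▸ mn_mem hx),
            pt_of_mem_pt he h2]
        rw [← hpe]
        exact mem_pt hx
      · intro hxB
        have hx : x ∈ Finset.Icc 1 m := P.le (pt_mem_parts he) hxB
        refine ⟨hx, ?_⟩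
        rw [rt_sig hx, rt_sig he]
        exact mn_of_mem_pt he hxB
    rw [hfib]
    exact pt_mem_parts he
  · intro hB
    obtain ⟨e, heB⟩ := P.nonempty_of_mem_parts hB
    have he : e ∈ Finset.Icc 1 m := P.le hB heB
    refine ⟨e, he, ?_⟩
    have : pt P e = B := pt_eq hB heB
    ext x
    simp only [mem_filter]
    constructor
    · intro hxB
      have hx : x ∈ Finset.Icc 1 m := P.le hB hxB
      refine ⟨hx, ?_⟩
      rw [rt_sig hx, rt_sig he]
      exact mn_of_mem_pt he (this ▸ hxB)
    · rintro ⟨hx, hxe⟩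
      rw [rt_sig hx, rt_sig he] at hxe
      have hpe : pt P x = pt P e := by
        rw [← pt_of_mem_pt hx (show mn P e ∈ pt P x from hxe ▸ mn_mem hx),
          pt_of_mem_pt he (mn_mem he)]
      rw [← this, ← hpe]
      exact mem_pt hx

lemma sig_toP {E : Finset (ℕ × ℕ)} (hE : Star m E) : sig (toP m E) = E := by
  obtain ⟨h1, h2, h3⟩ := hE
  have hmn : ∀ x ∈ Finset.Icc 1 m, mn (toP m E) x = rt E x := by
    intro x hx
    have hrtx : rt E x ∈ Finset.Icc 1 m := by
      rcases rt_cases E x with h | ⟨a, ha, _, ha1⟩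
      · rwa [h]
      · have := h1 a ha
        simp only [Finset.mem_Icc] at *
        omega
    have hBparts : (Finset.Icc 1 m).filter (fun y => rt E y = rt E x) ∈ (toP m E).parts :=
      mem_ofFibers_parts.2 ⟨x, hx, rfl⟩
    have hxB : x ∈ (Finset.Icc 1 m).filter (fun y => rt E y = rt E x) := by simp [hx]
    have hpt : pt (toP m E) x = (Finset.Icc 1 m).filter (fun y => rt E y = rt E x) :=
      pt_eq hBparts hxB
    apply le_antisymm
    · apply mn_le hx
      rw [hpt]
      simp only [mem_filter]
      exact ⟨hrtx, rt_idem h3 x⟩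
    · have hmem := mn_mem (P := toP m E) hx
      rw [hpt] at hmem
      simp only [mem_filter] at hmem
      rw [← hmem.2]
      exact rt_le h1 _
  rw [sig]
  rw [Finset.filter_congr (fun x hx => by rw [hmn x hx] : ∀ x ∈ Finset.Icc 1 m,
    mn (toP m E) x ≠ x ↔ rt E x ≠ x)]
  rw [Finset.image_congr (fun x hx => by
    simp only [mem_coe, mem_filter] at hx
    show (mn (toP m E) x, x) = (rt E x, x)
    rw [hmn x hx.1] : Set.EqOn (fun x => (mn (toP m E) x, x)) (fun x => (rt E x, x))
      ↑((Finset.Icc 1 m).filter (fun x => rt E x ≠ x)))]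
  ext a
  simp only [mem_image, mem_filter]
  constructor
  · rintro ⟨x, ⟨hx, hne⟩, rfl⟩
    rcases rt_cases E x with h | ⟨b, hb, hb2, hb1⟩
    · exact absurd h hne
    · show (rt E x, x) ∈ E
      rw [hb1, ← hb2, Prod.mk.eta]
      exact hb
  · intro ha
    refine ⟨a.2, ⟨?_, ?_⟩, ?_⟩
    · have := h1 a ha
      simp only [Finset.mem_Icc]
      omega
    · rw [rt_snd h2 ha]
      have := h1 a ha
      omega
    · rw [rt_snd h2 ha]

lemma card_sig : (sig P).card + P.parts.card = m := by
  have hinj : Set.InjOn (fun x => (mn P x, x)) ↑((Finset.Icc 1 m).filter (fun x => mn P x ≠ x)) := by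
    intro x _ y _ hxy
    exact congrArg Prod.snd hxy
  rw [sig, Finset.card_image_of_injOn hinj]
  have hmins : ((Finset.Icc 1 m).filter (fun x => mn P x = x)).card = P.parts.card := by
    have himg : ((Finset.Icc 1 m).filter (fun x => mn P x = x)).image (pt P) = P.parts := by
      ext B
      simp only [mem_image, mem_filter]
      constructor
      · rintro ⟨x, ⟨hx, _⟩, rfl⟩
        exact pt_mem_parts hx
      · intro hB
        obtain ⟨e, heB⟩ := P.nonempty_of_mem_parts hB
        have hBne : B.Nonempty := ⟨e, heB⟩
        set x := B.min' hBne with hxdef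
        have hxB : x ∈ B := B.min'_mem hBne
        have hx : x ∈ Finset.Icc 1 m := P.le hB hxB
        have hpt : pt P x = B := pt_eq hB hxB
        refine ⟨x, ⟨hx, ?_⟩, hpt⟩
        rw [mn_eq_min' hx]
        apply le_antisymm (Finset.min'_le _ _ (mem_pt hx))
        apply Finset.le_min'
        intro y hy
        rw [hpt] at hy
        exact Finset.min'_le _ _ hy
    have hinj2 : Set.InjOn (pt P) ↑((Finset.Icc 1 m).filter (fun x => mn P x = x)) := by
      intro x hx y hy hxy
      simp only [coe_filter, Set.mem_setOf_eq] at hx hy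
      have := mn_of_mem_pt hx.1 (hxy ▸ mem_pt hy.1)
      rw [hx.2, hy.2] at this
      exact this.symm
    rw [← himg, Finset.card_image_of_injOn hinj2]
  have hsplit := Finset.card_filter_add_card_filter_not
    (s := Finset.Icc 1 m) (p := fun x => mn P x ≠ x)
  simp only [not_not] at hsplit
  rw [hmins] at hsplit
  rw [hsplit, Nat.card_Icc]
  omega

/-! ### Stage I : matchings of `[1,N]` vs matching arc sets -/

def MQ (N : ℕ) (A : Finset (ℕ × ℕ)) : Prop :=
  (∀ a ∈ A, 1 ≤ a.1 ∧ a.1 < a.2 ∧ a.2 ≤ N) ∧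
  (∀ a ∈ A, ∀ b ∈ A, a ≠ b → a.1 ≠ b.1 ∧ a.1 ≠ b.2 ∧ a.2 ≠ b.1 ∧ a.2 ≠ b.2) ∧
  (∀ a ∈ A, ∀ b ∈ A, a.2 + 1 ≠ b.1) ∧
  (∀ a ∈ A, ∀ b ∈ A, a.1 + 1 = b.1 → a.2 < b.2)

variable {N : ℕ} {A : Finset (ℕ × ℕ)}

lemma MQ.rd (hA : MQ N A) : ∀ a ∈ A, ∀ b ∈ A, a.2 = b.2 → a = b := by
  intro a ha b hb hab
  by_contra hne
  exact (hA.2.1 a ha b hb hne).2.2.2 hab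

lemma MQ.lr (hA : MQ N A) : ∀ a ∈ A, ∀ b ∈ A, a.1 ≠ b.2 := by
  intro a ha b hb
  by_cases hab : a = b
  · subst hab
    have := hA.1 a ha
    omega
  · exact (hA.2.1 a ha b hb hab).2.1

lemma MQ.ld (hA : MQ N A) : ∀ a ∈ A, ∀ b ∈ A, a.1 = b.1 → a = b := by
  intro a ha b hb hab
  by_contra hne
  exact (hA.2.1 a ha b hb hne).1 hab

def toM (N : ℕ) (A : Finset (ℕ × ℕ)) : Finpartition (Finset.Icc 1 N) :=
  ofFibers (Finset.Icc 1 N) (rt A)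

lemma rt_fst (hA : MQ N A) {a : ℕ × ℕ} (ha : a ∈ A) : rt A a.1 = a.1 :=
  rt_of_not_right (fun b hb hb2 => hA.lr a ha b hb hb2.symm)

lemma fiber_pair (hA : MQ N A) {a : ℕ × ℕ} (ha : a ∈ A) :
    (Finset.Icc 1 N).filter (fun x => rt A x = a.1) = {a.1, a.2} := by
  have hb := hA.1 a ha
  ext x
  simp only [mem_filter, mem_insert, mem_singleton, Finset.mem_Icc]
  constructor
  · rintro ⟨hx, hrt⟩
    rcases rt_cases A x with h | ⟨b, hbA, hb2, hb1⟩
    · left; omega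
    · right
      rw [hrt] at hb1
      have : b = a := hA.ld b hbA a ha hb1.symm
      subst this
      omega
  · rintro (rfl | rfl)
    · exact ⟨by omega, rt_fst hA ha⟩
    · exact ⟨by omega, rt_snd hA.rd ha⟩

lemma fiber_single (hA : MQ N A) {x : ℕ} (hx : x ∈ Finset.Icc 1 N)
    (hun : ∀ a ∈ A, x ≠ a.1 ∧ x ≠ a.2) :
    (Finset.Icc 1 N).filter (fun y => rt A y = x) = {x} := by
  have hrtx : rt A x = x := rt_of_not_right (fun a ha h2 => (hun a ha).2 h2.symm)
  ext y
  simp only [mem_filter, mem_singleton]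
  constructor
  · rintro ⟨hy, hrt⟩
    rcases rt_cases A y with h | ⟨b, hbA, hb2, hb1⟩
    · omega
    · rw [hrt] at hb1
      exact absurd hb1 (hun b hbA).1
  · rintro rfl
    exact ⟨hx, hrtx⟩

lemma toM_parts (hA : MQ N A) :
    (toM N A).parts = A.image (fun a => ({a.1, a.2} : Finset ℕ)) ∪
      ((Finset.Icc 1 N).filter (fun x => ∀ a ∈ A, x ≠ a.1 ∧ x ≠ a.2)).image
        (fun x => {x}) := by
  ext B
  rw [toM, mem_ofFibers_parts]
  simp only [mem_union, mem_image, mem_filter]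
  constructor
  · rintro ⟨e, he, rfl⟩
    rcases rt_cases A e with h | ⟨b, hbA, hb2, hb1⟩
    · by_cases hcov : ∃ a ∈ A, e = a.1
      · obtain ⟨a, ha, rfl⟩ := hcov
        left
        exact ⟨a, ha, by rw [h, fiber_pair hA ha]⟩
      · right
        push_neg at hcov
        have hun : ∀ a ∈ A, e ≠ a.1 ∧ e ≠ a.2 := by
          intro a ha
          refine ⟨hcov a ha, fun he2 => ?_⟩
          have := rt_snd hA.rd ha
          rw [← he2, h] at this
          have := hA.1 a ha
          omega
        exact ⟨e, ⟨he, hun⟩, by rw [h, fiber_single hA he hun]⟩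
    · left
      refine ⟨b, hbA, ?_⟩
      rw [hb1, fiber_pair hA hbA]
  · rintro (⟨a, ha, rfl⟩ | ⟨x, ⟨hx, hun⟩, rfl⟩)
    · have hb := hA.1 a ha
      refine ⟨a.1, by simp only [Finset.mem_Icc]; omega, ?_⟩
      rw [rt_fst hA ha, fiber_pair hA ha]
    · refine ⟨x, hx, ?_⟩
      have hrtx : rt A x = x := rt_of_not_right (fun a ha h2 => (hun a ha).2 h2.symm)
      rw [hrtx, fiber_single hA hx hun]

lemma isMatching_toM (hA : MQ N A) : IsMatching (toM N A) := by
  intro B hB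
  rw [toM_parts hA] at hB
  simp only [mem_union, mem_image, mem_filter] at hB
  rcases hB with ⟨a, _, rfl⟩ | ⟨x, _, rfl⟩
  · exact (Finset.card_insert_le _ _).trans (by simp)
  · simp

lemma isArc_toM (hA : MQ N A) {p : ℕ × ℕ} : IsArc (toM N A) p ↔ p ∈ A := by
  constructor
  · rintro ⟨hlt, B, hB, hp1, hp2, _⟩
    rw [toM_parts hA] at hB
    simp only [mem_union, mem_image, mem_filter] at hB
    rcases hB with ⟨a, ha, rfl⟩ | ⟨x, _, rfl⟩
    · simp only [mem_insert, mem_singleton] at hp1 hp2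
      have hb := hA.1 a ha
      have hpa : p = a := by
        have : p.1 = a.1 ∧ p.2 = a.2 := by omega
        exact Prod.ext this.1 this.2
      rwa [hpa]
    · simp only [mem_singleton] at hp1 hp2
      omega
  · intro hp
    have hb := hA.1 p hp
    refine ⟨hb.2.1, {p.1, p.2}, ?_, by simp, by simp, ?_⟩
    · rw [toM_parts hA]
      simp only [mem_union, mem_image]
      exact Or.inl ⟨p, hp, rfl⟩
    · intro c hc
      simp only [mem_insert, mem_singleton] at hc
      omega

lemma numArcs_toM (hA : MQ N A) : numArcs (toM N A) = A.card := by
  have : {p : ℕ × ℕ | IsArc (toM N A) p} = ↑A := by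
    ext p
    simp only [Set.mem_setOf_eq, mem_coe]
    exact isArc_toM hA
  rw [numArcs, this, Set.ncard_coe_finset]

lemma toM_qset (hA : MQ N A) :
    IsMatching (toM N A) ∧ numArcs (toM N A) = A.card ∧
      ¬ HasNbrAlign (toM N A) ∧ ¬ HasLeftNesting (toM N A) := by
  refine ⟨isMatching_toM hA, numArcs_toM hA, ?_, ?_⟩
  · rintro ⟨a, b, haA, hbA, hab⟩
    rw [isArc_toM hA] at haA hbA
    exact hA.2.2.1 a haA b hbA hab
  · rintro ⟨a, b, haA, hbA, hab, hba⟩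
    rw [isArc_toM hA] at haA hbA
    have := hA.2.2.2 a haA b hbA hab
    omega

def arcF (N : ℕ) (M : Finpartition (Finset.Icc 1 N)) : Finset (ℕ × ℕ) :=
  ((Finset.Icc 1 N) ×ˢ (Finset.Icc 1 N)).filter
    (fun a => a.1 < a.2 ∧ ({a.1, a.2} : Finset ℕ) ∈ M.parts)

lemma isArc_iff_mem_arcF {M : Finpartition (Finset.Icc 1 N)} (hM : IsMatching M)
    {p : ℕ × ℕ} : IsArc M p ↔ p ∈ arcF N M := by
  constructor
  · rintro ⟨hlt, B, hB, hp1, hp2, _⟩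
    have hBeq : ({p.1, p.2} : Finset ℕ) = B := by
      apply Finset.eq_of_subset_of_card_le
      · intro c hc
        simp only [mem_insert, mem_singleton] at hc
        rcases hc with rfl | rfl <;> assumption
      · refine (hM B hB).trans ?_
        rw [Finset.card_insert_of_notMem (by simp; omega), Finset.card_singleton]
    simp only [arcF, mem_filter, Finset.mem_product]
    exact ⟨⟨M.le hB hp1, M.le hB hp2⟩, hlt, hBeq ▸ hB⟩
  · intro hp
    simp only [arcF, mem_filter, Finset.mem_product] at hp
    obtain ⟨⟨hp1, hp2⟩, hlt, hB⟩ := hp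
    refine ⟨hlt, {p.1, p.2}, hB, by simp, by simp, ?_⟩
    intro c hc
    simp only [mem_insert, mem_singleton] at hc
    omega

lemma arcF_MQ {M : Finpartition (Finset.Icc 1 N)} (hM : IsMatching M)
    (hNA : ¬ HasNbrAlign M) (hLN : ¬ HasLeftNesting M) : MQ N (arcF N M) := by
  have harc : ∀ p ∈ arcF N M, IsArc M p := fun p hp => (isArc_iff_mem_arcF hM).2 hp
  have hpd := M.disjoint
  have key : ∀ a ∈ arcF N M, ∀ b ∈ arcF N M, a ≠ b →
      a.1 ≠ b.1 ∧ a.1 ≠ b.2 ∧ a.2 ≠ b.1 ∧ a.2 ≠ b.2 := by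
    intro a ha b hb hne
    simp only [arcF, mem_filter, Finset.mem_product] at ha hb
    have hdisj : Disjoint ({a.1, a.2} : Finset ℕ) ({b.1, b.2} : Finset ℕ) := by
      by_cases heq : ({a.1, a.2} : Finset ℕ) = ({b.1, b.2} : Finset ℕ)
      · exfalso
        apply hne
        have h1 : a.1 ∈ ({b.1, b.2} : Finset ℕ) := heq ▸ (by simp)
        have h2 : a.2 ∈ ({b.1, b.2} : Finset ℕ) := heq ▸ (by simp)
        have h3 : b.1 ∈ ({a.1, a.2} : Finset ℕ) := heq ▸ (by simp)
        simp only [mem_insert, mem_singleton] at h1 h2 h3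
        have := ha.2.1; have := hb.2.1
        exact Prod.ext (by omega) (by omega)
      · exact hpd ha.2.2 hb.2.2 heq
    rw [Finset.disjoint_left] at hdisj
    refine ⟨fun h => ?_, fun h => ?_, fun h => ?_, fun h => ?_⟩
    · exact hdisj (Finset.mem_insert_self _ _) (Finset.mem_insert.2 (Or.inl h))
    · exact hdisj (Finset.mem_insert_self _ _)
        (Finset.mem_insert.2 (Or.inr (Finset.mem_singleton.2 h)))
    · exact hdisj (Finset.mem_insert.2 (Or.inr (Finset.mem_singleton.2 rfl)))
        (Finset.mem_insert.2 (Or.inl h))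
    · exact hdisj (Finset.mem_insert.2 (Or.inr (Finset.mem_singleton.2 rfl)))
        (Finset.mem_insert.2 (Or.inr (Finset.mem_singleton.2 h)))
  refine ⟨?_, key, ?_, ?_⟩
  · intro a ha
    simp only [arcF, mem_filter, Finset.mem_product, Finset.mem_Icc] at ha
    omega
  · intro a ha b hb hab
    exact hNA ⟨a, b, harc a ha, harc b hb, hab⟩
  · intro a ha b hb hab
    have hne : a ≠ b := fun h => by rw [h] at hab; omega
    have h4 := (key a ha b hb hne).2.2.2
    have : ¬ b.2 < a.2 := fun hlt => hLN ⟨a, b, harc a ha, harc b hb, hab, hlt⟩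
    omega

lemma card_arcF {M : Finpartition (Finset.Icc 1 N)} (hM : IsMatching M) :
    (arcF N M).card = numArcs M := by
  have : {p : ℕ × ℕ | IsArc M p} = ↑(arcF N M) := by
    ext p
    simp only [Set.mem_setOf_eq, mem_coe]
    exact isArc_iff_mem_arcF hM
  rw [numArcs, this, Set.ncard_coe_finset]

lemma toM_arcF {M : Finpartition (Finset.Icc 1 N)} (hM : IsMatching M)
    (hA : MQ N (arcF N M)) : toM N (arcF N M) = M := by
  apply Finpartition.ext
  rw [toM_parts hA]
  ext B
  simp only [mem_union, mem_image, mem_filter]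
  constructor
  · rintro (⟨a, ha, rfl⟩ | ⟨x, ⟨hx, hun⟩, rfl⟩)
    · simp only [arcF, mem_filter] at ha
      exact ha.2.2
    · obtain ⟨B, hB, hxB⟩ := M.exists_mem hx
      have hcard := hM B hB
      have hne := M.nonempty_of_mem_parts hB
      have : B = {x} := by
        rcases Nat.lt_or_ge B.card 2 with h | h
        · have : B.card = 1 := by
            have := Finset.card_pos.2 hne
            omega
          obtain ⟨y, hy⟩ := Finset.card_eq_one.1 this
          rw [hy] at hxB
          simp only [mem_singleton] at hxB
          rw [hy, hxB]
        · have hc2 : B.card = 2 := le_antisymm hcard h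
          obtain ⟨u, v, huv, hB2⟩ := Finset.card_eq_two.1 hc2
          exfalso
          rcases Nat.lt_or_ge u v with hlt | hge
          · have hmem : (u, v) ∈ arcF N M := by
              simp only [arcF, mem_filter, Finset.mem_product]
              refine ⟨⟨M.le hB (hB2 ▸ (by simp)), M.le hB (hB2 ▸ (by simp))⟩, hlt, hB2 ▸ hB⟩
            have := hun (u, v) hmem
            rw [hB2] at hxB
            simp only [mem_insert, mem_singleton] at hxB
            simp only at this
            omega
          · have hlt : v < u := by omega
            have hmem : (v, u) ∈ arcF N M := by
              have hB2' : B = {v, u} := by rw [hB2]; exact Finset.pair_comm u v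
              simp only [arcF, mem_filter, Finset.mem_product]
              refine ⟨⟨M.le hB (hB2' ▸ (by simp)), M.le hB (hB2' ▸ (by simp))⟩, hlt,
                hB2' ▸ hB⟩
            have := hun (v, u) hmem
            rw [hB2] at hxB
            simp only [mem_insert, mem_singleton] at hxB
            simp only at this
            omega
      rw [← this]
      exact hB
  · intro hB
    have hcard := hM B hB
    have hne := M.nonempty_of_mem_parts hB
    rcases Nat.lt_or_ge B.card 2 with h | h
    · have hc1 : B.card = 1 := by
        have := Finset.card_pos.2 hne
        omega
      obtain ⟨x, hx⟩ := Finset.card_eq_one.1 hc1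
      subst hx
      right
      refine ⟨x, ⟨M.le hB (by simp), ?_⟩, rfl⟩
      intro a ha
      simp only [arcF, mem_filter] at ha
      constructor <;> intro heq
      · have h1 : ({a.1, a.2} : Finset ℕ) ∈ M.parts := ha.2.2
        have h2 : a.1 ∈ ({a.1, a.2} : Finset ℕ) := by simp
        have h3 : a.1 ∈ ({x} : Finset ℕ) := by rw [heq]; simp
        -- two parts both contain a.1, so equal
        have : ({a.1, a.2} : Finset ℕ) = ({x} : Finset ℕ) := by
          by_contra hcon
          exact Finset.disjoint_left.1 (M.disjoint h1 hB hcon) h2 h3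
        have := congrArg Finset.card this
        rw [Finset.card_insert_of_notMem (by simp; omega), Finset.card_singleton,
          Finset.card_singleton] at this
        omega
      · have h1 : ({a.1, a.2} : Finset ℕ) ∈ M.parts := ha.2.2
        have h2 : a.2 ∈ ({a.1, a.2} : Finset ℕ) := by simp
        have h3 : a.2 ∈ ({x} : Finset ℕ) := by rw [heq]; simp
        have : ({a.1, a.2} : Finset ℕ) = ({x} : Finset ℕ) := by
          by_contra hcon
          exact Finset.disjoint_left.1 (M.disjoint h1 hB hcon) h2 h3
        have := congrArg Finset.card this
        rw [Finset.card_insert_of_notMem (by simp; omega), Finset.card_singleton,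
          Finset.card_singleton] at this
        omega
    · have hc2 : B.card = 2 := le_antisymm hcard h
      obtain ⟨u, v, huv, hB2⟩ := Finset.card_eq_two.1 hc2
      left
      rcases Nat.lt_or_ge u v with hlt | hge
      · refine ⟨(u, v), ?_, by rw [hB2]⟩
        simp only [arcF, mem_filter, Finset.mem_product]
        exact ⟨⟨M.le hB (hB2 ▸ (by simp)), M.le hB (hB2 ▸ (by simp))⟩, hlt, hB2 ▸ hB⟩
      · have hlt : v < u := by omega
        have hB2' : B = {v, u} := by rw [hB2]; exact Finset.pair_comm u v
        refine ⟨(v, u), ?_, by rw [hB2']⟩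
        simp only [arcF, mem_filter, Finset.mem_product]
        exact ⟨⟨M.le hB (hB2' ▸ (by simp)), M.le hB (hB2' ▸ (by simp))⟩, hlt, hB2' ▸ hB⟩

lemma arcF_toM (hA : MQ N A) : arcF N (toM N A) = A := by
  ext p
  rw [← isArc_iff_mem_arcF (isMatching_toM hA), isArc_toM hA]

/-! ### Stage III : the positional bijection -/

def outd (E : Finset (ℕ × ℕ)) (u : ℕ) : ℕ := (E.filter (fun a => a.1 = u)).card

def len (E : Finset (ℕ × ℕ)) (x : ℕ) : ℕ :=
  if (E.filter (fun a => a.2 = x)).Nonempty then 1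
  else if x = 1 then outd E x else outd E x + 1

def endf (E : Finset (ℕ × ℕ)) (x : ℕ) : ℕ := ∑ i ∈ Finset.Icc 1 x, len E i

def rnk (E : Finset (ℕ × ℕ)) (a : ℕ × ℕ) : ℕ :=
  (E.filter (fun b => b.1 = a.1 ∧ b.2 ≤ a.2)).card

def opA (E : Finset (ℕ × ℕ)) (a : ℕ × ℕ) : ℕ := endf E a.1 + rnk E a - outd E a.1

def phiF (E : Finset (ℕ × ℕ)) : Finset (ℕ × ℕ) :=
  E.image (fun a => (opA E a, endf E a.2))

def oc (A : Finset (ℕ × ℕ)) (p : ℕ) : ℕ := (A.filter (fun a => a.1 ≤ p)).card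

def gg (A : Finset (ℕ × ℕ)) (p : ℕ) : ℕ := 1 + p - oc A p

def psiF (A : Finset (ℕ × ℕ)) : Finset (ℕ × ℕ) :=
  A.image (fun a => (gg A a.1, gg A a.2))

section StarSide

variable {m : ℕ} {E : Finset (ℕ × ℕ)}

lemma len_right (ha : ∃ a ∈ E, a.2 = x) : len E x = 1 := by
  rw [len, if_pos]
  obtain ⟨a, ha, h2⟩ := ha
  exact ⟨a, mem_filter.2 ⟨ha, h2⟩⟩

lemma len_nonright (hx : ∀ a ∈ E, a.2 ≠ x) :
    len E x = if x = 1 then outd E x else outd E x + 1 := by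
  rw [len, if_neg]
  rintro ⟨a, ha⟩
  simp only [mem_filter] at ha
  exact hx a ha.1 ha.2

lemma len_pos (hE : Star m E) (hx : x ≠ 1) : 1 ≤ len E x := by
  rw [len]
  split_ifs <;> omega

lemma endf_succ (E : Finset (ℕ × ℕ)) (x : ℕ) :
    endf E (x + 1) = endf E x + len E (x + 1) :=
  Finset.sum_Icc_succ_top (by omega) _

lemma endf_mono (E : Finset (ℕ × ℕ)) (h : x ≤ y) : endf E x ≤ endf E y :=
  Finset.sum_le_sum_of_subset (Finset.Icc_subset_Icc_right h)

lemma endf_strict (hE : Star m E) (hx : 1 ≤ x) (hxy : x < y) :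
    endf E x < endf E y := by
  have h1 : endf E (x + 1) ≤ endf E y := endf_mono E (by omega)
  have h2 := endf_succ E x
  have h3 := len_pos hE (x := x + 1) (by omega)
  omega

lemma len_le_endf (E : Finset (ℕ × ℕ)) (hx : 1 ≤ x) : len E x ≤ endf E x :=
  Finset.single_le_sum (fun i _ => Nat.zero_le _) (by simp [Finset.mem_Icc]; omega)

lemma nonright_of_left (hE : Star m E) {a : ℕ × ℕ} (ha : a ∈ E) :
    ∀ b ∈ E, b.2 ≠ a.1 := fun b hb h => hE.2.2 a ha b hb h.symm

lemma outd_le_len (hE : Star m E) {a : ℕ × ℕ} (ha : a ∈ E) :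
    outd E a.1 ≤ len E a.1 := by
  rw [len_nonright (nonright_of_left hE ha)]
  split_ifs <;> omega

lemma rnk_pos {a : ℕ × ℕ} (ha : a ∈ E) : 1 ≤ rnk E a :=
  Finset.card_pos.2 ⟨a, mem_filter.2 ⟨ha, rfl, le_refl _⟩⟩

lemma rnk_le_outd (a : ℕ × ℕ) : rnk E a ≤ outd E a.1 :=
  Finset.card_le_card (fun b hb => by
    simp only [mem_filter] at hb ⊢
    exact ⟨hb.1, hb.2.1⟩)

lemma rnk_lt_rnk (hE : Star m E) {a b : ℕ × ℕ} (ha : a ∈ E) (hb : b ∈ E)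
    (h1 : a.1 = b.1) (h2 : a.2 < b.2) : rnk E a < rnk E b := by
  apply Finset.card_lt_card
  constructor
  · intro c hc
    simp only [mem_filter] at hc ⊢
    exact ⟨hc.1, hc.2.1.trans h1, by omega⟩
  · intro hsub
    have : b ∈ E.filter (fun c => c.1 = a.1 ∧ c.2 ≤ a.2) :=
      hsub (mem_filter.2 ⟨hb, rfl, le_refl _⟩)
    simp only [mem_filter] at this
    omega

lemma opA_eq {a : ℕ × ℕ} (hE : Star m E) (ha : a ∈ E) :
    opA E a + outd E a.1 = endf E a.1 + rnk E a := by
  have h1 : outd E a.1 ≤ len E a.1 := outd_le_len hE ha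
  have h2 : len E a.1 ≤ endf E a.1 := len_le_endf E (hE.1 a ha).1
  rw [opA]
  omega

/-- Position bounds for the opener of an arc. -/
lemma opA_bounds {a : ℕ × ℕ} (hE : Star m E) (ha : a ∈ E) :
    endf E (a.1 - 1) < opA E a ∧ opA E a ≤ endf E a.1 ∧
      (2 ≤ a.1 → endf E (a.1 - 1) + 2 ≤ opA E a) := by
  have hb := hE.1 a ha
  have he := opA_eq hE ha
  have hr1 := rnk_pos ha
  have hr2 := rnk_le_outd (E := E) a
  have hlen : len E a.1 = if a.1 = 1 then outd E a.1 else outd E a.1 + 1 :=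
    len_nonright (nonright_of_left hE ha)
  have heq : a.1 - 1 + 1 = a.1 := by omega
  have hes : endf E a.1 = endf E (a.1 - 1) + len E a.1 := by
    conv_lhs => rw [← heq]
    rw [endf_succ, heq]
  have h0 : endf E 0 = 0 := by rw [endf]; simp
  split_ifs at hlen with h1
  · have hz : a.1 - 1 = 0 := by omega
    rw [hz, h0] at hes ⊢
    omega
  · omega

lemma loc_unique (hE : Star m E) (x y p : ℕ) (hx : 1 ≤ x) (hy : 1 ≤ y)
    (h1 : endf E (x - 1) < p) (h2 : p ≤ endf E x)
    (h3 : endf E (y - 1) < p) (h4 : p ≤ endf E y) : x = y := by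
  by_contra hne
  rcases Nat.lt_or_ge x y with h | h
  · have : endf E x ≤ endf E (y - 1) := endf_mono E (by omega)
    omega
  · have hyx : y < x := by omega
    have : endf E y ≤ endf E (x - 1) := endf_mono E (by omega)
    omega

lemma endf_right_loc (hE : Star m E) {a : ℕ × ℕ} (ha : a ∈ E) :
    endf E a.2 = endf E (a.2 - 1) + 1 := by
  have hb := hE.1 a ha
  have hlen : len E a.2 = 1 := len_right ⟨a, ha, rfl⟩
  have : a.2 - 1 + 1 = a.2 := by omega
  rw [← this, endf_succ, this, hlen]

lemma endf_inj_right (hE : Star m E) {a b : ℕ × ℕ} (ha : a ∈ E) (hb : b ∈ E)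
    (h : endf E a.2 = endf E b.2) : a.2 = b.2 := by
  by_contra hne
  have hba := hE.1 a ha
  have hbb := hE.1 b hb
  rcases Nat.lt_or_ge a.2 b.2 with hlt | hge
  · have := endf_strict hE (x := a.2) (by omega) hlt
    omega
  · have := endf_strict hE (x := b.2) (y := a.2) (by omega) (by omega)
    omega

lemma phiF_inj (hE : Star m E) : Set.InjOn (fun a => (opA E a, endf E a.2)) ↑E := by
  intro a ha b hb hab
  simp only [mem_coe] at ha hb
  simp only [Prod.mk.injEq] at hab
  have h2 : a.2 = b.2 := endf_inj_right hE ha hb hab.2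
  exact hE.2.1 a ha b hb h2

lemma card_phiF (hE : Star m E) : (phiF E).card = E.card :=
  Finset.card_image_of_injOn (phiF_inj hE)

lemma phiF_MQ (hE : Star m E) : MQ (endf E m) (phiF E) := by
  have memP : ∀ p ∈ phiF E, ∃ a ∈ E, p = (opA E a, endf E a.2) := by
    intro p hp
    simp only [phiF, mem_image] at hp
    obtain ⟨a, ha, h⟩ := hp
    exact ⟨a, ha, h.symm⟩
  refine ⟨?_, ?_, ?_, ?_⟩
  · rintro p hp
    obtain ⟨a, ha, rfl⟩ := memP p hp
    have hb := hE.1 a ha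
    obtain ⟨ho1, ho2, -⟩ := opA_bounds hE ha
    have h3 : endf E a.1 ≤ endf E (a.2 - 1) := endf_mono E (by omega)
    have h4 : endf E a.2 = endf E (a.2 - 1) + 1 := endf_right_loc hE ha
    have h5 : endf E a.2 ≤ endf E m := endf_mono E (by omega)
    refine ⟨by omega, by omega, by omega⟩
  · rintro p hp q hq hne
    obtain ⟨a, ha, rfl⟩ := memP p hp
    obtain ⟨b, hb, rfl⟩ := memP q hq
    have hane : a ≠ b := fun h => hne (by rw [h])
    have hba := hE.1 a ha
    have hbb := hE.1 b hb
    obtain ⟨hoa1, hoa2, -⟩ := opA_bounds hE ha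
    obtain ⟨hob1, hob2, -⟩ := opA_bounds hE hb
    have hrla : endf E a.2 = endf E (a.2 - 1) + 1 := endf_right_loc hE ha
    have hrlb : endf E b.2 = endf E (b.2 - 1) + 1 := endf_right_loc hE hb
    refine ⟨fun h => ?_, fun h => ?_, fun h => ?_, fun h => ?_⟩
    · -- opA a ≠ opA b
      have h' : opA E a = opA E b := h
      have h11 : a.1 = b.1 := loc_unique hE a.1 b.1 (opA E a) hba.1 hbb.1 hoa1 hoa2
        (by omega) (by omega)
      have hra : opA E a + outd E a.1 = endf E a.1 + rnk E a := opA_eq hE ha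
      have hrb : opA E b + outd E b.1 = endf E b.1 + rnk E b := opA_eq hE hb
      rw [← h11] at hrb
      have hrr : rnk E a = rnk E b := by omega
      rcases Nat.lt_trichotomy a.2 b.2 with hlt | heq | hgt
      · have := rnk_lt_rnk hE ha hb h11 hlt; omega
      · exact hane (hE.2.1 a ha b hb heq)
      · have := rnk_lt_rnk hE hb ha h11.symm hgt; omega
    · -- opA a ≠ endf b.2
      have h' : opA E a = endf E b.2 := h
      have : a.1 = b.2 := loc_unique hE a.1 b.2 (opA E a) hba.1 (by omega) hoa1 hoa2
        (by omega) (by omega)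
      exact hE.2.2 a ha b hb this
    · -- endf a.2 ≠ opA b
      have h' : endf E a.2 = opA E b := h
      have : b.1 = a.2 := loc_unique hE b.1 a.2 (opA E b) hbb.1 (by omega) hob1 hob2
        (by omega) (by omega)
      exact hE.2.2 b hb a ha this
    · -- endf a.2 ≠ endf b.2
      have h' : endf E a.2 = endf E b.2 := h
      exact hane (hE.2.1 a ha b hb (endf_inj_right hE ha hb h'))
  · -- no CO
    rintro p hp q hq hco
    obtain ⟨a, ha, rfl⟩ := memP p hp
    obtain ⟨b, hb, rfl⟩ := memP q hq
    have hco' : endf E a.2 + 1 = opA E b := hco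
    have hba := hE.1 a ha
    have hbb := hE.1 b hb
    obtain ⟨hob1, hob2, hob3⟩ := opA_bounds hE hb
    rcases Nat.lt_or_ge b.1 2 with h1 | h1
    · have hb1 : b.1 = 1 := by omega
      rw [hb1] at hob2
      have : endf E 1 ≤ endf E a.2 := endf_mono E (by omega)
      omega
    · have h2 := hob3 h1
      have hrla : endf E a.2 = endf E (a.2 - 1) + 1 := endf_right_loc hE ha
      have : a.2 = b.1 := loc_unique hE a.2 b.1 (endf E a.2) (by omega) (by omega)
        (by omega) (by omega) (by omega) (by omega)
      exact hE.2.2 b hb a ha this.symm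
  · -- no LN
    rintro p hp q hq hln
    obtain ⟨a, ha, rfl⟩ := memP p hp
    obtain ⟨b, hb, rfl⟩ := memP q hq
    have hln' : opA E a + 1 = opA E b := hln
    show endf E a.2 < endf E b.2
    have hba := hE.1 a ha
    have hbb := hE.1 b hb
    obtain ⟨hoa1, hoa2, hoa3⟩ := opA_bounds hE ha
    obtain ⟨hob1, hob2, hob3⟩ := opA_bounds hE hb
    by_cases h11 : a.1 = b.1
    · have hra := opA_eq hE ha
      have hrb := opA_eq hE hb
      rw [← h11] at hrb
      have hrr : rnk E a < rnk E b := by omega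
      have hab2 : a.2 < b.2 := by
        rcases Nat.lt_trichotomy a.2 b.2 with hlt | heq | hgt
        · exact hlt
        · rw [hE.2.1 a ha b hb heq] at hrr; omega
        · have := rnk_lt_rnk hE hb ha h11.symm hgt; omega
      exact endf_strict hE (by omega) hab2
    · exfalso
      apply h11
      rcases Nat.lt_or_ge b.1 2 with h1 | h1
      · have hb1 : b.1 = 1 := by omega
        rw [hb1] at hob2
        have h0 : endf E 0 = 0 := by rw [endf]; simp
        have ha1 : a.1 = 1 := by
          apply loc_unique hE a.1 1 (opA E a) hba.1 (le_refl 1) hoa1 hoa2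
          · show endf E 0 < opA E a
            omega
          · omega
        omega
      · have h2 := hob3 h1
        exact loc_unique hE a.1 b.1 (opA E a) hba.1 (by omega) hoa1 hoa2
          (by omega) (by omega)

def cum (E : Finset (ℕ × ℕ)) (x : ℕ) : ℕ := (E.filter (fun a => a.1 ≤ x)).card

lemma cum_succ (E : Finset (ℕ × ℕ)) (x : ℕ) :
    cum E (x + 1) = cum E x + outd E (x + 1) := by
  rw [cum, cum, outd, ← Finset.card_union_of_disjoint]
  · congr 1
    ext a
    simp only [mem_union, mem_filter]
    by_cases haE : a ∈ E
    · simp only [haE, true_and]; omega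
    · simp [haE]
  · rw [Finset.disjoint_left]
    intro a ha ha'
    simp only [mem_filter] at ha ha'
    omega

lemma outd_right (hE : Star m E) {x : ℕ} (hx : ∃ a ∈ E, a.2 = x) : outd E x = 0 := by
  obtain ⟨a, ha, h2⟩ := hx
  rw [outd, Finset.card_eq_zero, Finset.filter_eq_empty_iff]
  intro b hb h1
  exact hE.2.2 b hb a ha (h1.trans h2.symm)

lemma cum_zero (hE : Star m E) : cum E 0 = 0 := by
  rw [cum, Finset.card_eq_zero, Finset.filter_eq_empty_iff]
  intro b hb
  have := hE.1 b hb
  omega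

/-- The fundamental counting identity. -/
lemma endf_cum (hE : Star m E) {x : ℕ} (hx : 1 ≤ x) : endf E x + 1 = x + cum E x := by
  induction x, hx using Nat.le_induction with
  | base =>
    have h1 : ¬ (E.filter (fun a => a.2 = 1)).Nonempty := by
      rintro ⟨a, ha⟩
      simp only [mem_filter] at ha
      have := hE.1 a ha.1
      omega
    have hlen : len E 1 = outd E 1 := by rw [len, if_neg h1, if_pos rfl]
    have hendf : endf E 1 = len E 1 := by rw [endf]; simp
    have hcum : cum E 1 = cum E 0 + outd E 1 := cum_succ E 0
    have hc0 : cum E 0 = 0 := cum_zero hE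
    omega
  | succ n hn ih =>
    rw [endf_succ, cum_succ]
    by_cases hr : (E.filter (fun a => a.2 = n + 1)).Nonempty
    · have h1 : len E (n + 1) = 1 := by rw [len, if_pos hr]
      have h2 : outd E (n + 1) = 0 := by
        apply outd_right hE
        obtain ⟨a, ha⟩ := hr
        simp only [mem_filter] at ha
        exact ⟨a, ha.1, ha.2⟩
      omega
    · have h1 : len E (n + 1) = outd E (n + 1) + 1 := by
        rw [len, if_neg hr, if_neg (by omega)]
      omega

lemma cum_all (hE : Star m E) : cum E m = E.card := by
  rw [cum]
  congr 1
  apply Finset.filter_true_of_mem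
  intro a ha
  have := hE.1 a ha
  omega

lemma endf_total (hE : Star m E) (hm : 1 ≤ m) : endf E m + 1 = m + E.card := by
  have h1 := endf_cum hE hm
  rw [cum_all hE] at h1
  omega

lemma oc_phiF (hE : Star m E) (p : ℕ) :
    oc (phiF E) p = (E.filter (fun a => opA E a ≤ p)).card := by
  rw [oc, phiF, Finset.filter_image]
  apply Finset.card_image_of_injOn
  exact (phiF_inj hE).mono (by
    intro a ha
    simp only [coe_filter, Set.mem_setOf_eq] at ha
    exact ha.1)

lemma opA_le_endf_iff (hE : Star m E) {a : ℕ × ℕ} (ha : a ∈ E) (x : ℕ) :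
    opA E a ≤ endf E x ↔ a.1 ≤ x := by
  have hb := hE.1 a ha
  obtain ⟨ho1, ho2, -⟩ := opA_bounds hE ha
  constructor
  · intro h
    by_contra hgt
    have : endf E x ≤ endf E (a.1 - 1) := endf_mono E (by omega)
    omega
  · intro h
    exact ho2.trans (endf_mono E h)

lemma gg_phiF_endf (hE : Star m E) {x : ℕ} (hx : 1 ≤ x) :
    gg (phiF E) (endf E x) = x := by
  have h1 : oc (phiF E) (endf E x) = cum E x := by
    rw [oc_phiF hE, cum]
    congr 1
    ext a
    simp only [mem_filter]
    constructor
    · rintro ⟨ha, h⟩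
      exact ⟨ha, (opA_le_endf_iff hE ha x).1 h⟩
    · rintro ⟨ha, h⟩
      exact ⟨ha, (opA_le_endf_iff hE ha x).2 h⟩
  have h2 := endf_cum hE hx
  rw [gg, h1]
  omega

lemma gg_phiF_opA (hE : Star m E) {a : ℕ × ℕ} (ha : a ∈ E) :
    gg (phiF E) (opA E a) = a.1 := by
  have hb := hE.1 a ha
  have hsplit : E.filter (fun b => opA E b ≤ opA E a) =
      E.filter (fun b => b.1 ≤ a.1 - 1) ∪ E.filter (fun b => b.1 = a.1 ∧ b.2 ≤ a.2) := by
    ext b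
    simp only [mem_union, mem_filter]
    constructor
    · rintro ⟨hbE, h⟩
      rcases Nat.lt_trichotomy b.1 a.1 with hlt | heq | hgt
      · exact Or.inl ⟨hbE, by omega⟩
      · right
        refine ⟨hbE, heq, ?_⟩
        have hra := opA_eq hE ha
        have hrb := opA_eq hE hbE
        rw [heq] at hrb
        have hrr : rnk E b ≤ rnk E a := by omega
        by_contra hgt2
        have := rnk_lt_rnk hE ha hbE heq.symm (by omega)
        omega
      · exfalso
        obtain ⟨hob1, -, -⟩ := opA_bounds hE hbE
        obtain ⟨-, hoa2, -⟩ := opA_bounds hE ha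
        have : endf E a.1 ≤ endf E (b.1 - 1) := endf_mono E (by omega)
        omega
    · rintro (⟨hbE, h⟩ | ⟨hbE, h1, h2⟩)
      · refine ⟨hbE, ?_⟩
        obtain ⟨-, hob2, -⟩ := opA_bounds hE hbE
        obtain ⟨hoa1, -, -⟩ := opA_bounds hE ha
        have : endf E b.1 ≤ endf E (a.1 - 1) := endf_mono E (by omega)
        omega
      · refine ⟨hbE, ?_⟩
        have hra := opA_eq hE ha
        have hrb := opA_eq hE hbE
        rw [h1] at hrb
        have : rnk E b ≤ rnk E a := by
          apply Finset.card_le_card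
          intro c hc
          simp only [mem_filter] at hc ⊢
          refine ⟨hc.1, hc.2.1.trans h1, by omega⟩
        omega
  have hdisj : Disjoint (E.filter (fun b => b.1 ≤ a.1 - 1))
      (E.filter (fun b => b.1 = a.1 ∧ b.2 ≤ a.2)) := by
    rw [Finset.disjoint_left]
    intro b hb1 hb2
    simp only [mem_filter] at hb1 hb2
    omega
  have hoc : oc (phiF E) (opA E a) = cum E (a.1 - 1) + rnk E a := by
    rw [oc_phiF hE, hsplit, Finset.card_union_of_disjoint hdisj, cum, rnk]
  have hra := opA_eq hE ha
  have hc1 : endf E a.1 + 1 = a.1 + cum E a.1 := endf_cum hE hb.1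
  have hc2 : cum E a.1 = cum E (a.1 - 1) + outd E a.1 := by
    have heq : a.1 - 1 + 1 = a.1 := by omega
    conv_lhs => rw [← heq]
    rw [cum_succ, heq]
  have hr1 := rnk_pos ha
  have hr2 := rnk_le_outd (E := E) a
  rw [gg, hoc]
  omega

lemma psiF_phiF (hE : Star m E) : psiF (phiF E) = E := by
  have key : ∀ a ∈ E, (gg (phiF E) (opA E a), gg (phiF E) (endf E a.2)) = a := by
    intro a ha
    have hb := hE.1 a ha
    exact Prod.ext (gg_phiF_opA hE ha) (gg_phiF_endf hE (x := a.2) (by omega))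
  apply Finset.ext
  intro p
  constructor
  · intro hp
    rw [psiF, mem_image] at hp
    obtain ⟨q, hq, rfl⟩ := hp
    rw [phiF, mem_image] at hq
    obtain ⟨a, ha, rfl⟩ := hq
    show (gg (phiF E) (opA E a), gg (phiF E) (endf E a.2)) ∈ E
    rw [key a ha]
    exact ha
  · intro hp
    rw [psiF, mem_image]
    refine ⟨(opA E p, endf E p.2), ?_, ?_⟩
    · rw [phiF, mem_image]
      exact ⟨p, hp, rfl⟩
    · show (gg (phiF E) (opA E p), gg (phiF E) (endf E p.2)) = p
      exact key p hp

end StarSide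

section MatchSide

variable {N : ℕ} {A : Finset (ℕ × ℕ)}

lemma oc_le (hA : MQ N A) (p : ℕ) : oc A p ≤ p := by
  have hinj : Set.InjOn Prod.fst (↑(A.filter (fun a => a.1 ≤ p)) : Set (ℕ × ℕ)) := by
    intro a ha b hb hab
    simp only [coe_filter, Set.mem_setOf_eq] at ha hb
    exact hA.ld a ha.1 b hb.1 hab
  calc oc A p = ((A.filter (fun a => a.1 ≤ p)).image Prod.fst).card :=
        (Finset.card_image_of_injOn hinj).symm
    _ ≤ (Finset.Icc 1 p).card := by
        apply Finset.card_le_card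
        intro x hx
        simp only [mem_image, mem_filter] at hx
        obtain ⟨a, ⟨haA, hap⟩, rfl⟩ := hx
        have := hA.1 a haA
        simp only [Finset.mem_Icc]
        omega
    _ = p := by rw [Nat.card_Icc]; omega

lemma outd_le_one (hA : MQ N A) (q : ℕ) : outd A q ≤ 1 := by
  rw [outd, Finset.card_le_one]
  intro a ha b hb
  simp only [mem_filter] at ha hb
  exact hA.ld a ha.1 b hb.1 (ha.2.trans hb.2.symm)

lemma oc_zero (hA : MQ N A) : oc A 0 = 0 := by
  rw [oc, Finset.card_eq_zero, Finset.filter_eq_empty_iff]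
  intro a ha
  have := hA.1 a ha
  omega

lemma gg_zero (hA : MQ N A) : gg A 0 = 1 := by
  rw [gg, oc_zero hA]

lemma gg_pos (hA : MQ N A) (p : ℕ) : 1 ≤ gg A p := by
  have := oc_le hA p
  rw [gg]
  omega

lemma gg_step (hA : MQ N A) (p : ℕ) :
    gg A (p + 1) + outd A (p + 1) = gg A p + 1 := by
  have h1 : oc A (p + 1) = oc A p + outd A (p + 1) := cum_succ A p
  have h2 := oc_le hA p
  have h3 := oc_le hA (p + 1)
  have h4 := outd_le_one hA (p + 1)
  rw [gg, gg]
  omega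

lemma gg_mono (hA : MQ N A) {p q : ℕ} (h : p ≤ q) : gg A p ≤ gg A q := by
  induction q, h using Nat.le_induction with
  | base => exact le_refl _
  | succ n hn ih =>
    have := gg_step hA n
    have := outd_le_one hA (n + 1)
    omega

lemma outd_pos_iff (q : ℕ) : 0 < outd A q ↔ ∃ a ∈ A, a.1 = q := by
  rw [outd, Finset.card_pos]
  constructor
  · rintro ⟨a, ha⟩
    simp only [mem_filter] at ha
    exact ⟨a, ha.1, ha.2⟩
  · rintro ⟨a, ha, h⟩
    exact ⟨a, mem_filter.2 ⟨ha, h⟩⟩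

lemma outd_closer (hA : MQ N A) {a : ℕ × ℕ} (ha : a ∈ A) : outd A a.2 = 0 := by
  rw [outd, Finset.card_eq_zero, Finset.filter_eq_empty_iff]
  intro b hb h
  exact hA.lr b hb a ha h

lemma gg_closer_step (hA : MQ N A) {a : ℕ × ℕ} (ha : a ∈ A) :
    gg A a.2 = gg A (a.2 - 1) + 1 := by
  have hb := hA.1 a ha
  have heq : a.2 - 1 + 1 = a.2 := by omega
  have := gg_step hA (a.2 - 1)
  rw [heq] at this
  rw [outd_closer hA ha] at this
  omega

lemma gg_lt_closer (hA : MQ N A) {a : ℕ × ℕ} (ha : a ∈ A) {p : ℕ} (h : p < a.2) :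
    gg A p < gg A a.2 := by
  have h1 : gg A p ≤ gg A (a.2 - 1) := gg_mono hA (by omega)
  have h2 := gg_closer_step hA ha
  omega

lemma gg_closer_lt (hA : MQ N A) {a : ℕ × ℕ} (ha : a ∈ A) {p : ℕ} (h : a.2 < p) :
    gg A a.2 < gg A p := by
  have h0 : outd A (a.2 + 1) = 0 := by
    by_contra hne
    obtain ⟨b, hb, hb1⟩ := (outd_pos_iff (A := A) (a.2 + 1)).1 (by omega)
    exact hA.2.2.1 a ha b hb hb1.symm
  have h1 := gg_step hA a.2
  rw [h0] at h1
  have h2 : gg A (a.2 + 1) ≤ gg A p := gg_mono hA (by omega)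
  omega

lemma gg_eq_closer (hA : MQ N A) {a : ℕ × ℕ} (ha : a ∈ A) {p : ℕ}
    (h : gg A p = gg A a.2) : p = a.2 := by
  rcases Nat.lt_trichotomy p a.2 with hlt | heq | hgt
  · have := gg_lt_closer hA ha hlt; omega
  · exact heq
  · have := gg_closer_lt hA ha hgt; omega

lemma partner_mono (hA : MQ N A) :
    ∀ d, ∀ a b : ℕ × ℕ, a ∈ A → b ∈ A → b.1 - a.1 = d → a.1 < b.1 →
      gg A a.1 = gg A b.1 → a.2 < b.2 := by
  intro d
  induction d using Nat.strong_induction_on with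
  | _ d ih =>
    intro a b ha hb hd hlt heq
    have h1 : gg A (a.1 + 1) = gg A a.1 := by
      have hu : gg A (a.1 + 1) ≤ gg A b.1 := gg_mono hA (by omega)
      have hl : gg A a.1 ≤ gg A (a.1 + 1) := gg_mono hA (by omega)
      omega
    have h2 : 0 < outd A (a.1 + 1) := by
      have := gg_step hA a.1
      omega
    obtain ⟨c, hc, hc1⟩ := (outd_pos_iff (A := A) (a.1 + 1)).1 h2
    have hac : a.2 < c.2 := hA.2.2.2 a ha c hc hc1.symm
    by_cases hcb : c.1 = b.1
    · have hcb2 : c.2 = b.2 := by rw [hA.ld c hc b hb hcb]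
      omega
    · have hclt : c.1 < b.1 := by omega
      have hgc : gg A c.1 = gg A b.1 := by rw [hc1, h1, heq]
      have := ih (b.1 - c.1) (by omega) c b hc hb rfl hclt hgc
      omega

lemma order_iff (hA : MQ N A) {a b : ℕ × ℕ} (ha : a ∈ A) (hb : b ∈ A)
    (heq : gg A a.1 = gg A b.1) : b.1 ≤ a.1 ↔ b.2 ≤ a.2 := by
  rcases Nat.lt_trichotomy b.1 a.1 with hlt | he | hgt
  · have := partner_mono hA (a.1 - b.1) b a hb ha rfl hlt heq.symm
    constructor <;> intro <;> omega
  · rw [hA.ld a ha b hb he.symm]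
    simp
  · have := partner_mono hA (b.1 - a.1) a b ha hb rfl hgt heq
    constructor <;> intro <;> omega

lemma psiF_inj (hA : MQ N A) :
    Set.InjOn (fun a => (gg A a.1, gg A a.2)) (↑A : Set (ℕ × ℕ)) := by
  intro a ha b hb hab
  simp only [Prod.mk.injEq] at hab
  have h2 : a.2 = b.2 := gg_eq_closer hA hb hab.2
  exact hA.rd a ha b hb h2

lemma psiF_card (hA : MQ N A) : (psiF A).card = A.card :=
  Finset.card_image_of_injOn (psiF_inj hA)

lemma psiF_star (hA : MQ N A) : Star (gg A N) (psiF A) := by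
  have memP : ∀ p ∈ psiF A, ∃ a ∈ A, p = (gg A a.1, gg A a.2) := by
    intro p hp
    simp only [psiF, mem_image] at hp
    obtain ⟨a, ha, h⟩ := hp
    exact ⟨a, ha, h.symm⟩
  refine ⟨?_, ?_, ?_⟩
  · intro p hp
    obtain ⟨a, ha, rfl⟩ := memP p hp
    have hb := hA.1 a ha
    have h1 := gg_pos hA a.1
    have h2 := gg_lt_closer hA ha (p := a.1) (by omega)
    have h3 : gg A a.2 ≤ gg A N := gg_mono hA (by omega)
    exact ⟨h1, h2, h3⟩
  · intro p hp q hq hpq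
    obtain ⟨a, ha, rfl⟩ := memP p hp
    obtain ⟨b, hb, rfl⟩ := memP q hq
    have h2 : a.2 = b.2 := gg_eq_closer hA hb hpq
    rw [hA.rd a ha b hb h2]
  · intro p hp q hq hpq
    obtain ⟨a, ha, rfl⟩ := memP p hp
    obtain ⟨b, hb, rfl⟩ := memP q hq
    have : a.1 = b.2 := gg_eq_closer hA hb hpq
    exact hA.lr a ha b hb this

lemma outd_psiF (hA : MQ N A) (x : ℕ) :
    outd (psiF A) x = (A.filter (fun a => gg A a.1 = x)).card := by
  rw [outd, psiF, Finset.filter_image]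
  apply Finset.card_image_of_injOn
  exact (psiF_inj hA).mono (by
    intro a ha
    simp only [coe_filter, Set.mem_setOf_eq] at ha
    exact ha.1)

lemma fib_closer (hA : MQ N A) {a : ℕ × ℕ} (ha : a ∈ A) :
    (Finset.Icc 1 N).filter (fun p => gg A p = gg A a.2) = {a.2} := by
  have hb := hA.1 a ha
  ext p
  simp only [mem_filter, mem_singleton, Finset.mem_Icc]
  constructor
  · rintro ⟨-, h⟩
    exact gg_eq_closer hA ha h
  · rintro rfl
    exact ⟨by omega, rfl⟩

lemma op_positions (hA : MQ N A) (x : ℕ) :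
    (Finset.Icc 1 N).filter (fun p => gg A p = x ∧ 0 < outd A p) =
      (A.filter (fun a => gg A a.1 = x)).image Prod.fst := by
  ext p
  simp only [mem_filter, mem_image, Finset.mem_Icc]
  constructor
  · rintro ⟨hp, hgg, hod⟩
    obtain ⟨a, ha, h1⟩ := (outd_pos_iff (A := A) p).1 hod
    exact ⟨a, ⟨ha, by rw [h1, hgg]⟩, h1⟩
  · rintro ⟨a, ⟨ha, hgg⟩, rfl⟩
    have hb := hA.1 a ha
    refine ⟨⟨by omega, by omega⟩, hgg, ?_⟩
    rw [outd_pos_iff (A := A)]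
    exact ⟨a, ha, rfl⟩

lemma ex_nonop (hA : MQ N A) {x : ℕ} (hx2 : 2 ≤ x) (hxm : x ≤ gg A N) :
    ∃ q, q ∈ Finset.Icc 1 N ∧ outd A q = 0 ∧ gg A q = x := by
  have hocN := oc_le hA N
  have hN1 : 1 ≤ N := by
    rcases Nat.eq_zero_or_pos N with h | h
    · rw [gg, h] at hxm
      rw [h] at hocN
      omega
    · exact h
  set S := (Finset.Icc 1 N).filter (fun p => x ≤ gg A p) with hS
  have hSne : S.Nonempty := ⟨N, by simp only [hS, mem_filter, Finset.mem_Icc]; omega⟩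
  set q := S.min' hSne with hq
  have hqS : q ∈ S := S.min'_mem hSne
  simp only [hS, mem_filter, Finset.mem_Icc] at hqS
  have hglt : gg A (q - 1) < x := by
    rcases Nat.lt_or_ge (q - 1) 1 with h | h
    · have : q - 1 = 0 := by omega
      rw [this, gg_zero hA]
      omega
    · by_contra hge
      have : q - 1 ∈ S := by
        simp only [hS, mem_filter, Finset.mem_Icc]
        omega
      have := S.min'_le _ this
      omega
  have heq : q - 1 + 1 = q := by omega
  have hstep := gg_step hA (q - 1)
  rw [heq] at hstep
  have hout := outd_le_one hA q
  refine ⟨q, by simp only [Finset.mem_Icc]; omega, by omega, by omega⟩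

lemma uniq_nonop (hA : MQ N A) {q q' : ℕ} (h1 : 1 ≤ q) (hlt : q < q')
    (ho : outd A q' = 0) (hgg : gg A q = gg A q') : False := by
  have heq : q' - 1 + 1 = q' := by omega
  have hstep := gg_step hA (q' - 1)
  rw [heq, ho] at hstep
  have : gg A q ≤ gg A (q' - 1) := gg_mono hA (by omega)
  omega

lemma fib_card (hA : MQ N A) {x : ℕ} (hx1 : 1 ≤ x) (hxm : x ≤ gg A N)
    (hnr : ∀ a ∈ A, gg A a.2 ≠ x) :
    ((Finset.Icc 1 N).filter (fun p => gg A p = x)).card =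
      (A.filter (fun a => gg A a.1 = x)).card + (if x = 1 then 0 else 1) := by
  set fib := (Finset.Icc 1 N).filter (fun p => gg A p = x) with hfib
  have hsplit := Finset.card_filter_add_card_filter_not
    (s := fib) (p := fun p => 0 < outd A p)
  have h1 : fib.filter (fun p => 0 < outd A p) =
      (A.filter (fun a => gg A a.1 = x)).image Prod.fst := by
    rw [hfib, Finset.filter_filter, ← op_positions hA x]
  have h1c : (fib.filter (fun p => 0 < outd A p)).card =
      (A.filter (fun a => gg A a.1 = x)).card := by
    rw [h1]
    apply Finset.card_image_of_injOn
    intro a ha b hb hab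
    simp only [coe_filter, Set.mem_setOf_eq] at ha hb
    exact hA.ld a ha.1 b hb.1 hab
  have h2c : (fib.filter (fun p => ¬ 0 < outd A p)).card = if x = 1 then 0 else 1 := by
    split_ifs with hx
    · rw [Finset.card_eq_zero, Finset.filter_eq_empty_iff]
      intro p hp hpo
      rw [hfib, mem_filter, Finset.mem_Icc] at hp
      have heq : p - 1 + 1 = p := by omega
      have hstep := gg_step hA (p - 1)
      rw [heq] at hstep
      have := gg_pos hA (p - 1)
      omega
    · obtain ⟨q, hqI, hqo, hqg⟩ := ex_nonop hA (by omega) hxm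
      rw [Finset.card_eq_one]
      refine ⟨q, ?_⟩
      ext p
      simp only [mem_filter, mem_singleton, hfib, Finset.mem_Icc]
      constructor
      · rintro ⟨⟨⟨hp1, hp2⟩, hpg⟩, hpo⟩
        rcases Nat.lt_trichotomy p q with h | h | h
        · exact (uniq_nonop hA hp1 h hqo (by rw [hpg, hqg])).elim
        · exact h
        · rw [Finset.mem_Icc] at hqI
          exact (uniq_nonop hA (by omega) h (by omega) (by rw [hpg, hqg])).elim
      · rintro rfl
        rw [Finset.mem_Icc] at hqI
        exact ⟨⟨⟨hqI.1, hqI.2⟩, hqg⟩, by omega⟩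
  omega

lemma len_psiF (hA : MQ N A) {x : ℕ} (hx1 : 1 ≤ x) (hxm : x ≤ gg A N) :
    len (psiF A) x = ((Finset.Icc 1 N).filter (fun p => gg A p = x)).card := by
  by_cases hr : ∃ a ∈ A, gg A a.2 = x
  · obtain ⟨a, ha, hax⟩ := hr
    have h1 : len (psiF A) x = 1 := by
      apply len_right
      exact ⟨(gg A a.1, gg A a.2), by
        rw [psiF, mem_image]; exact ⟨a, ha, rfl⟩, hax⟩
    rw [h1, ← hax, fib_closer hA ha, Finset.card_singleton]
  · push_neg at hr
    have hnr : ∀ b ∈ psiF A, b.2 ≠ x := by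
      intro b hb
      rw [psiF, mem_image] at hb
      obtain ⟨a, ha, rfl⟩ := hb
      exact hr a ha
    rw [len_nonright hnr, fib_card hA hx1 hxm hr, outd_psiF hA]
    split_ifs with h <;> omega

lemma endf_psiF (hA : MQ N A) {x : ℕ} (hxm : x ≤ gg A N) :
    endf (psiF A) x = ((Finset.Icc 1 N).filter (fun p => gg A p ≤ x)).card := by
  rw [endf]
  rw [Finset.card_eq_sum_card_fiberwise (f := gg A) (t := Finset.Icc 1 x) (by
    intro p hp
    simp only [coe_filter, Set.mem_setOf_eq, mem_filter] at hp
    have := gg_pos hA p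
    simp only [coe_Icc, Set.mem_Icc]
    omega)]
  apply Finset.sum_congr rfl
  intro y hy
  simp only [Finset.mem_Icc] at hy
  rw [len_psiF hA hy.1 (by omega), Finset.filter_filter]
  congr 1
  ext p
  simp only [mem_filter, Finset.mem_Icc]
  constructor
  · rintro ⟨h1, h2⟩
    exact ⟨h1, by omega, h2⟩
  · rintro ⟨h1, h2, h3⟩
    exact ⟨h1, h3⟩

lemma endf_psiF_closer (hA : MQ N A) {a : ℕ × ℕ} (ha : a ∈ A) :
    endf (psiF A) (gg A a.2) = a.2 := by
  have hb := hA.1 a ha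
  rw [endf_psiF hA (gg_mono hA (by omega : a.2 ≤ N))]
  have : (Finset.Icc 1 N).filter (fun p => gg A p ≤ gg A a.2) = Finset.Icc 1 a.2 := by
    ext p
    simp only [mem_filter, Finset.mem_Icc]
    constructor
    · rintro ⟨⟨h1, h2⟩, h3⟩
      refine ⟨h1, ?_⟩
      by_contra hgt
      have := gg_closer_lt hA ha (p := p) (by omega)
      omega
    · rintro ⟨h1, h2⟩
      exact ⟨⟨h1, by omega⟩, gg_mono hA h2⟩
  rw [this, Nat.card_Icc]
  omega

lemma opA_psiF (hA : MQ N A) {a : ℕ × ℕ} (ha : a ∈ A) :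
    opA (psiF A) (gg A a.1, gg A a.2) = a.1 := by
  have hb := hA.1 a ha
  set u := gg A a.1 with hu
  have ht : outd (psiF A) u = (A.filter (fun b => gg A b.1 = u)).card := outd_psiF hA u
  have hrnk : rnk (psiF A) (u, gg A a.2) =
      (A.filter (fun b => gg A b.1 = u ∧ b.1 ≤ a.1)).card := by
    rw [rnk, psiF, Finset.filter_image]
    rw [Finset.card_image_of_injOn ((psiF_inj hA).mono (by
      intro b hbm
      simp only [coe_filter, Set.mem_setOf_eq] at hbm
      exact hbm.1))]
    congr 1
    ext b
    simp only [mem_filter]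
    constructor
    · rintro ⟨hbA, h1, h2⟩
      refine ⟨hbA, h1, ?_⟩
      have hb2 : b.2 ≤ a.2 := by
        by_contra hgt
        have := gg_lt_closer hA hbA (p := a.2) (by omega)
        omega
      exact (order_iff hA ha hbA (by rw [← hu, h1])).2 hb2
    · rintro ⟨hbA, h1, h2⟩
      refine ⟨hbA, h1, ?_⟩
      have hb2 : b.2 ≤ a.2 := (order_iff hA ha hbA (by rw [← hu, h1])).1 h2
      exact gg_mono hA hb2
  have hendf : endf (psiF A) u =
      a.1 + (A.filter (fun b => gg A b.1 = u ∧ a.1 < b.1)).card := by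
    rw [endf_psiF hA (hu ▸ gg_mono hA (show a.1 ≤ N by omega))]
    have hset : (Finset.Icc 1 N).filter (fun p => gg A p ≤ u) =
        Finset.Icc 1 a.1 ∪
          (A.filter (fun b => gg A b.1 = u ∧ a.1 < b.1)).image Prod.fst := by
      ext p
      simp only [mem_union, mem_filter, mem_image, Finset.mem_Icc]
      constructor
      · rintro ⟨⟨hp1, hp2⟩, hple⟩
        rcases le_or_gt p a.1 with h | h
        · exact Or.inl ⟨hp1, h⟩
        · right
          have hge : u ≤ gg A p := hu ▸ gg_mono hA (le_of_lt h)
          have hgp : gg A p = u := le_antisymm hple hge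
          have hgp1 : gg A (p - 1) = u := by
            have l1 : gg A a.1 ≤ gg A (p - 1) := gg_mono hA (by omega)
            have l2 : gg A (p - 1) ≤ gg A p := gg_mono hA (by omega)
            omega
          have hstep := gg_step hA (p - 1)
          rw [(by omega : p - 1 + 1 = p)] at hstep
          have hodp : 0 < outd A p := by omega
          obtain ⟨b, hbA, hb1⟩ := (outd_pos_iff (A := A) p).1 hodp
          exact ⟨b, ⟨hbA, by rw [hb1, hgp], by omega⟩, hb1⟩
      · rintro (⟨hp1, hp2⟩ | ⟨b, ⟨hbA, hbu, hblt⟩, rfl⟩)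
        · exact ⟨⟨hp1, by omega⟩, hu ▸ gg_mono hA hp2⟩
        · have hbb := hA.1 b hbA
          exact ⟨⟨by omega, by omega⟩, le_of_eq hbu⟩
    have himg : ((A.filter (fun b => gg A b.1 = u ∧ a.1 < b.1)).image Prod.fst).card =
        (A.filter (fun b => gg A b.1 = u ∧ a.1 < b.1)).card := by
      apply Finset.card_image_of_injOn
      intro b hb1 c hc1 hbc
      simp only [coe_filter, Set.mem_setOf_eq] at hb1 hc1
      exact hA.ld b hb1.1 c hc1.1 hbc
    rw [hset, Finset.card_union_of_disjoint, Nat.card_Icc]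
    · omega
    · rw [Finset.disjoint_left]
      rintro p hp hp2
      simp only [Finset.mem_Icc] at hp
      simp only [mem_image, mem_filter] at hp2
      obtain ⟨b, ⟨-, -, hblt⟩, rfl⟩ := hp2
      omega
  have e1 : (A.filter (fun b => gg A b.1 = u)).filter (fun b => b.1 ≤ a.1) =
      A.filter (fun b => gg A b.1 = u ∧ b.1 ≤ a.1) := by
    rw [Finset.filter_filter]
  have e2 : (A.filter (fun b => gg A b.1 = u)).filter (fun b => ¬ b.1 ≤ a.1) =
      A.filter (fun b => gg A b.1 = u ∧ a.1 < b.1) := by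
    rw [Finset.filter_filter]
    ext b
    simp only [mem_filter, not_le]
  have hsplitt := Finset.card_filter_add_card_filter_not
    (s := A.filter (fun b => gg A b.1 = u)) (p := fun b => b.1 ≤ a.1)
  rw [e1, e2] at hsplitt
  have hsub : (A.filter (fun b => gg A b.1 = u ∧ b.1 ≤ a.1)).card ≤
      (A.filter (fun b => gg A b.1 = u)).card :=
    Finset.card_le_card (fun b hbm => by
      simp only [mem_filter] at hbm ⊢
      exact ⟨hbm.1, hbm.2.1⟩)
  rw [opA]
  show endf (psiF A) u + rnk (psiF A) (u, gg A a.2) - outd (psiF A) u = a.1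
  rw [hrnk, hendf, ht]
  omega

lemma phiF_psiF (hA : MQ N A) : phiF (psiF A) = A := by
  have hsub : A ⊆ phiF (psiF A) := by
    intro a ha
    rw [phiF, mem_image]
    refine ⟨(gg A a.1, gg A a.2), by rw [psiF, mem_image]; exact ⟨a, ha, rfl⟩, ?_⟩
    show (opA (psiF A) (gg A a.1, gg A a.2), endf (psiF A) (gg A a.2)) = a
    exact Prod.ext (opA_psiF hA ha) (endf_psiF_closer hA ha)
  refine (Finset.eq_of_subset_of_card_le hsub ?_).symm
  have h1 := card_phiF (psiF_star hA)
  have h2 := psiF_card hA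
  omega

end MatchSide

theorem main (m k N b : ℕ) (hN : N + 1 = m + k) (hb : b + k = m) :
    Qnum N k = Stirling m b := by
  classical
  set Sset : Set (Finpartition (Finset.Icc 1 m)) := {P | P.parts.card = b} with hSset
  set ES : Set (Finset (ℕ × ℕ)) := {E | Star m E ∧ E.card = k} with hES
  set MQS : Set (Finset (ℕ × ℕ)) := {A | MQ N A ∧ A.card = k} with hMQS
  have S1 : sig '' Sset = ES := by
    ext E
    simp only [Set.mem_image, hSset, hES, Set.mem_setOf_eq]
    constructor
    · rintro ⟨P, hP, rfl⟩
      refine ⟨sig_star, ?_⟩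
      have := card_sig (P := P)
      omega
    · rintro ⟨hE, hcard⟩
      refine ⟨toP m E, ?_, sig_toP hE⟩
      have := card_sig (P := toP m E)
      rw [sig_toP hE] at this
      omega
  have S2 : phiF '' ES = MQS := by
    ext A
    simp only [Set.mem_image, hES, hMQS, Set.mem_setOf_eq]
    constructor
    · rintro ⟨E, ⟨hE, hcard⟩, rfl⟩
      have hm : 1 ≤ m := by omega
      have htot := endf_total hE hm
      have hNe : endf E m = N := by omega
      refine ⟨hNe ▸ phiF_MQ hE, ?_⟩
      rw [card_phiF hE, hcard]
    · rintro ⟨hA, hcard⟩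
      have hocN : oc A N = k := by
        rw [oc, Finset.filter_true_of_mem (fun a ha => by
          have := hA.1 a ha; omega), hcard]
      have hocle := oc_le hA N
      have hgN : gg A N = m := by rw [gg, hocN]; omega
      refine ⟨psiF A, ⟨hgN ▸ psiF_star hA, by rw [psiF_card hA, hcard]⟩, phiF_psiF hA⟩
  have S3 : (fun A => toM N A) '' MQS =
      {P : Finpartition (Finset.Icc 1 N) |
        IsMatching P ∧ numArcs P = k ∧ ¬ HasNbrAlign P ∧ ¬ HasLeftNesting P} := by
    ext M
    simp only [Set.mem_image, hMQS, Set.mem_setOf_eq]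
    constructor
    · rintro ⟨A, ⟨hA, hcard⟩, rfl⟩
      obtain ⟨q1, q2, q3, q4⟩ := toM_qset hA
      exact ⟨q1, by rw [q2, hcard], q3, q4⟩
    · rintro ⟨h1, h2, h3, h4⟩
      have hA := arcF_MQ h1 h3 h4
      refine ⟨arcF N M, ⟨hA, ?_⟩, toM_arcF h1 hA⟩
      rw [card_arcF h1, h2]
  rw [Qnum, Stirling, ← S3, ← S2, ← S1]
  rw [Set.ncard_image_of_injOn (f := fun A => toM N A) ?inj3,
    Set.ncard_image_of_injOn (f := phiF) ?inj2,
    Set.ncard_image_of_injOn (f := sig) ?inj1]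
  case inj1 =>
    intro P hP P' hP' h
    rw [← toP_sig (P := P), ← toP_sig (P := P'), h]
  case inj2 =>
    rw [S1]
    intro E hE E' hE' h
    rw [← psiF_phiF (hE := hE.1), ← psiF_phiF (hE := hE'.1), h]
  case inj3 =>
    rw [S1, S2]
    intro A hA A' hA' h
    have h' : toM N A = toM N A' := h
    rw [← arcF_toM hA.1, ← arcF_toM hA'.1, h']

end St4

/-- `Q(n-1,k)` equals the Stirling number of the second kind `S(n-k, n-2k)`. -/
theorem stmt_4 (n k : ℕ) (hk1 : 1 ≤ k) (hk2 : k ≤ (n - 1) / 2) :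
    Qnum (n - 1) k = Stirling (n - k) (n - 2 * k) := by
  have h2k : 2 * k ≤ n - 1 := by omega
  exact St4.main (n - k) k (n - 1) (n - 2 * k) (by omega) (by omega)
end

section
/- For every integer n ≥ 3, the polynomials g_n(y) = Σ_{k=0}^{⌊(n-1)/2⌋} Q(n-1,k)·y^k satisfy the identity g_n(y) = g_{n-1}(y) + (n-2)·y·g_{n-2}(y) − 2y²·g'_{n-2}(y), where g' denotes the formal derivative. -/
open Finset

open Polynomial in
/-- The generating polynomial of the numbers `Q(n-1,k)`. -/
noncomputable def gpoly (n : ℕ) : Polynomial ℤ :=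
  ∑ k ∈ Finset.range ((n - 1) / 2 + 1),
    Polynomial.C (Qnum (n - 1) k : ℤ) * Polynomial.X ^ k

open scoped Classical

namespace AuxQ

/-- Validity of an arc set on `[m]`. -/
def ValidOn (m : ℕ) (M : Finset (ℕ × ℕ)) : Prop :=
  (∀ p ∈ M, 1 ≤ p.1 ∧ p.1 < p.2 ∧ p.2 ≤ m) ∧
  ∀ p ∈ M, ∀ q ∈ M, p ≠ q → p.1 ≠ q.1 ∧ p.1 ≠ q.2 ∧ p.2 ≠ q.1 ∧ p.2 ≠ q.2

/-- Avoidance of neighbor alignments and left nestings. -/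
def Avoid (M : Finset (ℕ × ℕ)) : Prop :=
  (∀ p ∈ M, ∀ q ∈ M, p.2 + 1 ≠ q.1) ∧
  ∀ p ∈ M, ∀ q ∈ M, p.1 + 1 = q.1 → ¬ q.2 < p.2

noncomputable def qfin (m k : ℕ) : Finset (Finset (ℕ × ℕ)) :=
  ((Finset.Icc 1 m ×ˢ Finset.Icc 1 m).powerset).filter
    (fun M => ValidOn m M ∧ M.card = k ∧ Avoid M)

lemma mem_qfin {m k : ℕ} {M : Finset (ℕ × ℕ)} :
    M ∈ qfin m k ↔ ValidOn m M ∧ M.card = k ∧ Avoid M := by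
  constructor
  · intro h
    exact (Finset.mem_filter.1 h).2
  · intro h
    rw [qfin, Finset.mem_filter, Finset.mem_powerset]
    refine ⟨?_, h⟩
    intro p hp
    have := h.1.1 p hp
    simp only [Finset.mem_product, Finset.mem_Icc]
    omega

lemma pair_eq {a b c d : ℕ} (h : ({a, b} : Finset ℕ) = {c, d}) (hab : a < b) (hcd : c < d) :
    a = c ∧ b = d := by
  have h1 : a ∈ ({c, d} : Finset ℕ) := h ▸ by simp
  have h2 : b ∈ ({c, d} : Finset ℕ) := h ▸ by simp
  have h3 : c ∈ ({a, b} : Finset ℕ) := h.symm ▸ by simp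
  have h4 : d ∈ ({a, b} : Finset ℕ) := h.symm ▸ by simp
  simp only [Finset.mem_insert, Finset.mem_singleton] at h1 h2 h3 h4
  omega

noncomputable def arcFin {m : ℕ} (P : Finpartition (Finset.Icc 1 m)) : Finset (ℕ × ℕ) :=
  (Finset.Icc 1 m ×ˢ Finset.Icc 1 m).filter (fun a => IsArc P a)

lemma mem_arcFin {m : ℕ} {P : Finpartition (Finset.Icc 1 m)} {a : ℕ × ℕ} :
    a ∈ arcFin P ↔ IsArc P a := by
  simp only [arcFin, Finset.mem_filter, and_iff_right_iff_imp]
  rintro ⟨h1, B, hB, ha1, ha2, -⟩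
  have hsub := P.le hB
  exact Finset.mem_product.2 ⟨hsub ha1, hsub ha2⟩

lemma isArc_iff {m : ℕ} {P : Finpartition (Finset.Icc 1 m)} (hP : IsMatching P) {a : ℕ × ℕ} :
    IsArc P a ↔ a.1 < a.2 ∧ ({a.1, a.2} : Finset ℕ) ∈ P.parts := by
  constructor
  · rintro ⟨hlt, B, hB, h1, h2, -⟩
    refine ⟨hlt, ?_⟩
    have hsub : ({a.1, a.2} : Finset ℕ) ⊆ B := by
      intro x hx
      simp only [Finset.mem_insert, Finset.mem_singleton] at hx
      rcases hx with rfl | rfl <;> assumption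
    have hcard2 : ({a.1, a.2} : Finset ℕ).card = 2 := by
      rw [Finset.card_insert_of_notMem (by simp [hlt.ne]), Finset.card_singleton]
    have := hP B hB
    have heq : ({a.1, a.2} : Finset ℕ) = B :=
      Finset.eq_of_subset_of_card_le hsub (by omega)
    rwa [heq]
  · rintro ⟨hlt, hB⟩
    refine ⟨hlt, {a.1, a.2}, hB, by simp, by simp, ?_⟩
    intro c hc
    simp only [Finset.mem_insert, Finset.mem_singleton] at hc
    rcases hc with rfl | rfl <;> omega

lemma numArcs_eq {m : ℕ} (P : Finpartition (Finset.Icc 1 m)) :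
    numArcs P = (arcFin P).card := by
  rw [numArcs, show {a : ℕ × ℕ | IsArc P a} = ↑(arcFin P) by
    ext a; simp [mem_arcFin], Set.ncard_coe_finset]

lemma hasNbrAlign_iff {m : ℕ} {P : Finpartition (Finset.Icc 1 m)} :
    HasNbrAlign P ↔ ∃ a ∈ arcFin P, ∃ b ∈ arcFin P, a.2 + 1 = b.1 := by
  simp only [HasNbrAlign, mem_arcFin]
  tauto

lemma hasLeftNesting_iff {m : ℕ} {P : Finpartition (Finset.Icc 1 m)} :
    HasLeftNesting P ↔ ∃ a ∈ arcFin P, ∃ b ∈ arcFin P, a.1 + 1 = b.1 ∧ b.2 < a.2 := by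
  simp only [HasLeftNesting, mem_arcFin]
  tauto

/-- The set of endpoints of an arc set. -/
def epts (M : Finset (ℕ × ℕ)) : Finset ℕ := M.biUnion (fun p => {p.1, p.2})

lemma mem_epts {M : Finset (ℕ × ℕ)} {x : ℕ} :
    x ∈ epts M ↔ ∃ p ∈ M, x = p.1 ∨ x = p.2 := by
  simp only [epts, Finset.mem_biUnion, Finset.mem_insert, Finset.mem_singleton]

lemma card_epts {m : ℕ} {M : Finset (ℕ × ℕ)} (h : ValidOn m M) :
    (epts M).card = 2 * M.card := by
  rw [epts, Finset.card_biUnion]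
  · rw [Finset.sum_congr rfl (fun p hp => ?_), Finset.sum_const, smul_eq_mul, mul_comm]
    have := (h.1 p hp).2.1
    rw [Finset.card_insert_of_notMem (by simp; omega), Finset.card_singleton]
  · intro p hp q hq hne
    have := h.2 p hp q hq hne
    simp only [Finset.disjoint_left, Finset.mem_insert, Finset.mem_singleton]
    omega

lemma epts_subset {m : ℕ} {M : Finset (ℕ × ℕ)} (h : ValidOn m M) :
    epts M ⊆ Finset.Icc 1 m := by
  intro x hx
  rw [mem_epts] at hx
  obtain ⟨p, hp, hx⟩ := hx
  have := h.1 p hp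
  simp only [Finset.mem_Icc]
  omega

lemma card_le_of_mem_qfin {m k : ℕ} {M : Finset (ℕ × ℕ)} (h : M ∈ qfin m k) : 2 * k ≤ m := by
  rw [mem_qfin] at h
  have h1 := card_epts h.1
  have h2 := Finset.card_le_card (epts_subset h.1)
  rw [Nat.card_Icc] at h2
  omega

/-- The parts of the partition associated with an arc set. -/
noncomputable def partsOf (m : ℕ) (M : Finset (ℕ × ℕ)) : Finset (Finset ℕ) :=
  M.image (fun p => ({p.1, p.2} : Finset ℕ)) ∪
    (Finset.Icc 1 m \ epts M).image (fun x => ({x} : Finset ℕ))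

lemma mem_partsOf {m : ℕ} {M : Finset (ℕ × ℕ)} {B : Finset ℕ} :
    B ∈ partsOf m M ↔ (∃ p ∈ M, B = ({p.1, p.2} : Finset ℕ)) ∨
      ∃ x, (x ∈ Finset.Icc 1 m ∧ x ∉ epts M) ∧ B = {x} := by
  simp only [partsOf, Finset.mem_union, Finset.mem_image, Finset.mem_sdiff, eq_comm]

/-- Construct a partition from a valid arc set. -/
noncomputable def toFP (m : ℕ) (M : Finset (ℕ × ℕ)) (h : ValidOn m M) :
    Finpartition (Finset.Icc 1 m) where
  parts := partsOf m M
  supIndep := by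
    rw [partsOf]
    rw [Finset.supIndep_iff_pairwiseDisjoint]
    intro B hB C hC hne
    simp only [Finset.coe_union, Set.mem_union, Finset.coe_image, Set.mem_image,
      Finset.mem_coe, Finset.mem_sdiff] at hB hC
    simp only [Function.onFun, id_eq, Finset.disjoint_left]
    intro x hxB hxC
    rcases hB with ⟨p, hp, rfl⟩ | ⟨y, hy, rfl⟩ <;> rcases hC with ⟨q, hq, rfl⟩ | ⟨z, hz, rfl⟩ <;>
      simp only [Finset.mem_insert, Finset.mem_singleton] at hxB hxC
    · rcases eq_or_ne p q with rfl | hpq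
      · exact hne rfl
      · have := h.2 p hp q hq hpq
        omega
    · exact hz.2 (mem_epts.2 ⟨p, hp, by omega⟩)
    · exact hy.2 (mem_epts.2 ⟨q, hq, by omega⟩)
    · exact hne (by rw [show y = z by omega])
  sup_parts := by
    rw [partsOf]
    apply Finset.Subset.antisymm
    · intro x hx
      rw [Finset.mem_sup] at hx
      obtain ⟨B, hB, hxB⟩ := hx
      simp only [Finset.mem_union, Finset.mem_image, Finset.mem_sdiff] at hB
      rcases hB with ⟨p, hp, rfl⟩ | ⟨y, hy, rfl⟩
      · have := h.1 p hp
        simp only [id_eq, Finset.mem_insert, Finset.mem_singleton] at hxB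
        simp only [Finset.mem_Icc]
        omega
      · simp only [id_eq, Finset.mem_singleton] at hxB
        subst hxB
        exact hy.1
    · intro x hx
      rw [Finset.mem_sup]
      by_cases hxE : x ∈ epts M
      · obtain ⟨p, hp, hxp⟩ := mem_epts.1 hxE
        exact ⟨{p.1, p.2}, Finset.mem_union_left _ (Finset.mem_image_of_mem _ hp), by
          simp only [id_eq, Finset.mem_insert, Finset.mem_singleton]; omega⟩
      · exact ⟨{x}, Finset.mem_union_right _
          (Finset.mem_image_of_mem _ (Finset.mem_sdiff.2 ⟨hx, hxE⟩)), by simp⟩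
  bot_notMem := by
    rw [partsOf]
    simp only [Finset.bot_eq_empty, Finset.mem_union, Finset.mem_image]
    rintro (⟨p, hp, hep⟩ | ⟨y, hy, hey⟩)
    · exact absurd hep (by simp)
    · exact absurd hey (by simp)

lemma toFP_parts (m : ℕ) (M : Finset (ℕ × ℕ)) (h : ValidOn m M) :
    (toFP m M h).parts = partsOf m M := rfl

lemma toFP_matching (m : ℕ) (M : Finset (ℕ × ℕ)) (h : ValidOn m M) :
    IsMatching (toFP m M h) := by
  intro B hB
  rw [toFP_parts, mem_partsOf] at hB
  rcases hB with ⟨p, hp, rfl⟩ | ⟨y, hy, rfl⟩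
  · exact (Finset.card_insert_le _ _).trans (by simp)
  · simp

lemma toFP_arcFin (m : ℕ) (M : Finset (ℕ × ℕ)) (h : ValidOn m M) :
    arcFin (toFP m M h) = M := by
  ext a
  rw [mem_arcFin, isArc_iff (toFP_matching m M h), toFP_parts, mem_partsOf]
  constructor
  · rintro ⟨hlt, hmem⟩
    rcases hmem with ⟨p, hp, hep⟩ | ⟨y, hy, hey⟩
    · have hb := h.1 p hp
      obtain ⟨h1, h2⟩ := pair_eq hep hlt (by omega)
      have : a = p := Prod.ext h1 h2
      rwa [this]
    · exfalso
      have h1 : a.1 ∈ ({y} : Finset ℕ) := hey ▸ by simp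
      have h2 : a.2 ∈ ({y} : Finset ℕ) := hey ▸ by simp
      simp only [Finset.mem_singleton] at h1 h2
      omega
  · intro ha
    exact ⟨(h.1 a ha).2.1, Or.inl ⟨a, ha, rfl⟩⟩

lemma parts_char {m : ℕ} {P : Finpartition (Finset.Icc 1 m)} (hP : IsMatching P)
    {B : Finset ℕ} :
    B ∈ P.parts ↔ (∃ a ∈ arcFin P, B = {a.1, a.2}) ∨
      ∃ x, x ∈ Finset.Icc 1 m ∧ x ∉ epts (arcFin P) ∧ B = {x} := by
  constructor
  · intro hB
    have hcard := hP B hB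
    have hne : B ≠ ∅ := P.ne_bot hB
    have hpos : 0 < B.card := Finset.card_pos.2 (Finset.nonempty_of_ne_empty hne)
    interval_cases hc : B.card
    · obtain ⟨x, rfl⟩ := Finset.card_eq_one.1 hc
      refine Or.inr ⟨x, P.le hB (by simp), ?_, rfl⟩
      rw [mem_epts]
      rintro ⟨p, hp, hxp⟩
      rw [mem_arcFin] at hp
      rw [isArc_iff hP] at hp
      have hx2 : x ∈ ({p.1, p.2} : Finset ℕ) := by
        simp only [Finset.mem_insert, Finset.mem_singleton]; omega
      have hxB : x ∈ ({x} : Finset ℕ) := by simp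
      have hne2 : ({x} : Finset ℕ) ≠ {p.1, p.2} := by
        intro hcon
        have : ({p.1, p.2} : Finset ℕ).card = 2 := by
          rw [Finset.card_insert_of_notMem (by simp; omega), Finset.card_singleton]
        rw [← hcon] at this
        simp at this
      exact (Finset.disjoint_left.1 (P.disjoint hB hp.2 hne2)) hxB hx2
    · obtain ⟨x, y, hxy, rfl⟩ := Finset.card_eq_two.1 hc
      rcases Nat.lt_or_ge x y with hlt | hge
      · refine Or.inl ⟨(x, y), ?_, rfl⟩
        rw [mem_arcFin, isArc_iff hP]
        exact ⟨hlt, hB⟩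
      · have hlt : y < x := by omega
        refine Or.inl ⟨(y, x), ?_, ?_⟩
        · rw [mem_arcFin, isArc_iff hP]
          exact ⟨hlt, by rwa [Finset.pair_comm]⟩
        · rw [Finset.pair_comm]
  · rintro (⟨a, ha, rfl⟩ | ⟨x, hx1, hx2, rfl⟩)
    · rw [mem_arcFin, isArc_iff hP] at ha
      exact ha.2
    · -- x is in some part, which must be the singleton {x}
      have hx' : x ∈ P.parts.sup id := by rw [P.sup_parts]; exact hx1
      rw [Finset.mem_sup] at hx'
      obtain ⟨B, hB, hxB⟩ := hx'
      have hcard := hP B hB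
      have hpos : 0 < B.card := Finset.card_pos.2 ⟨x, hxB⟩
      interval_cases hc : B.card
      · obtain ⟨z, rfl⟩ := Finset.card_eq_one.1 hc
        simp only [id_eq, Finset.mem_singleton] at hxB
        subst hxB
        exact hB
      · exfalso
        obtain ⟨u, v, huv, rfl⟩ := Finset.card_eq_two.1 hc
        apply hx2
        rw [mem_epts]
        rcases Nat.lt_or_ge u v with hlt | hge
        · refine ⟨(u, v), ?_, ?_⟩
          · rw [mem_arcFin, isArc_iff hP]; exact ⟨hlt, hB⟩
          · simp only [id_eq, Finset.mem_insert, Finset.mem_singleton] at hxB; omega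
        · refine ⟨(v, u), ?_, ?_⟩
          · rw [mem_arcFin, isArc_iff hP]
            exact ⟨by omega, by rwa [Finset.pair_comm]⟩
          · simp only [id_eq, Finset.mem_insert, Finset.mem_singleton] at hxB; omega

lemma fp_ext {m : ℕ} {P Q : Finpartition (Finset.Icc 1 m)} (h : P.parts = Q.parts) : P = Q := by
  cases P; cases Q; simpa using h

lemma arcFin_injOn {m : ℕ} {P Q : Finpartition (Finset.Icc 1 m)}
    (hP : IsMatching P) (hQ : IsMatching Q) (h : arcFin P = arcFin Q) : P = Q := by
  apply fp_ext
  ext B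
  rw [parts_char hP, parts_char hQ, h]

lemma qnum_eq_card (m k : ℕ) : Qnum m k = (qfin m k).card := by
  rw [Qnum]
  set S := {P : Finpartition (Finset.Icc 1 m) |
    IsMatching P ∧ numArcs P = k ∧ ¬HasNbrAlign P ∧ ¬HasLeftNesting P} with hS
  have hinj : Set.InjOn arcFin S := by
    intro P hP Q hQ h
    exact arcFin_injOn hP.1 hQ.1 h
  have himg : arcFin '' S = ↑(qfin m k) := by
    ext M
    simp only [Set.mem_image, Finset.coe_sort_coe, Finset.mem_coe]
    constructor
    · rintro ⟨P, hP, rfl⟩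
      obtain ⟨hm, hk, hA, hL⟩ := hP
      rw [mem_qfin]
      refine ⟨⟨?_, ?_⟩, ?_, ?_, ?_⟩
      · intro p hp
        have hp2 := hp
        rw [mem_arcFin] at hp2
        have hlt := hp2.1
        simp only [arcFin, Finset.mem_filter, Finset.mem_product, Finset.mem_Icc] at hp
        omega
      · intro p hp q hq hne
        rw [mem_arcFin, isArc_iff hm] at hp hq
        have hnep : ({p.1, p.2} : Finset ℕ) ≠ {q.1, q.2} := by
          intro hcon
          obtain ⟨h1, h2⟩ := pair_eq hcon hp.1 hq.1
          exact hne (Prod.ext h1 h2)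
        have hd := Finset.disjoint_left.1 (P.disjoint hp.2 hq.2 hnep)
        have h1 := hd (show p.1 ∈ id ({p.1, p.2} : Finset ℕ) by simp)
        have h2 := hd (show p.2 ∈ id ({p.1, p.2} : Finset ℕ) by simp)
        simp only [id_eq, Finset.mem_insert, Finset.mem_singleton, not_or] at h1 h2
        exact ⟨h1.1, h1.2, h2.1, h2.2⟩
      · rw [← numArcs_eq]; exact hk
      · intro p hp q hq hcon
        exact hA (hasNbrAlign_iff.2 ⟨p, hp, q, hq, hcon⟩)
      · intro p hp q hq hcon hcon2
        exact hL (hasLeftNesting_iff.2 ⟨p, hp, q, hq, hcon, hcon2⟩)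
    · intro hM
      rw [mem_qfin] at hM
      obtain ⟨hv, hk, hA1, hA2⟩ := hM
      refine ⟨toFP m M hv, ⟨toFP_matching m M hv, ?_, ?_, ?_⟩, toFP_arcFin m M hv⟩
      · rw [numArcs_eq, toFP_arcFin]; exact hk
      · rw [hasNbrAlign_iff, toFP_arcFin]
        rintro ⟨p, hp, q, hq, hcon⟩
        exact hA1 p hp q hq hcon
      · rw [hasLeftNesting_iff, toFP_arcFin]
        rintro ⟨p, hp, q, hq, hcon, hcon2⟩
        exact hA2 p hp q hq hcon hcon2
  calc S.ncard = (arcFin '' S).ncard := (Set.ncard_image_of_injOn hinj).symm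
    _ = (qfin m k).card := by rw [himg, Set.ncard_coe_finset]

end AuxQ


namespace AuxQ

def grc (g x : ℕ) : ℕ := if x < g then x else x + 1
def shc (i x : ℕ) : ℕ := if x < i then x else x - 1
def gro (g : ℕ) (p : ℕ × ℕ) : ℕ × ℕ := (grc g p.1, grc g p.2)
def shr (i : ℕ) (p : ℕ × ℕ) : ℕ × ℕ := (shc i p.1, shc i p.2)

lemma grc_inj {g x y : ℕ} (h : grc g x = grc g y) : x = y := by
  unfold grc at h; split_ifs at h <;> omega

lemma grc_lt {g x y : ℕ} : grc g x < grc g y ↔ x < y := by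
  unfold grc; split_ifs <;> omega

lemma shc_lt {i x y : ℕ} (hx : x ≠ i) (hy : y ≠ i) : shc i x < shc i y ↔ x < y := by
  unfold shc; split_ifs <;> omega

noncomputable def insA (m g : ℕ) (M : Finset (ℕ × ℕ)) : Finset (ℕ × ℕ) :=
  insert (g, m) (M.image (gro g))

noncomputable def lep (m : ℕ) (M : Finset (ℕ × ℕ)) : ℕ :=
  M.sup (fun q => if q.2 = m then q.1 else 0)

noncomputable def delA (m : ℕ) (M : Finset (ℕ × ℕ)) : Finset (ℕ × ℕ) :=
  (M.filter (fun p => p.2 ≠ m)).image (shr (lep m M))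

noncomputable def gapset (m : ℕ) (M : Finset (ℕ × ℕ)) : Finset ℕ :=
  (Finset.Icc 1 (m - 1)).filter (fun g => (∀ p ∈ M, p.2 + 1 ≠ g) ∧ ∀ p ∈ M, p.1 ≠ g)

lemma mem_insA {m g : ℕ} {M : Finset (ℕ × ℕ)} {q : ℕ × ℕ} :
    q ∈ insA m g M ↔ q = (g, m) ∨ ∃ p ∈ M, gro g p = q := by
  simp [insA]

lemma mem_gapset {m g : ℕ} {M : Finset (ℕ × ℕ)} :
    g ∈ gapset m M ↔ (1 ≤ g ∧ g ≤ m - 1) ∧ (∀ p ∈ M, p.2 + 1 ≠ g) ∧ ∀ p ∈ M, p.1 ≠ g := by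
  simp [gapset, Finset.mem_Icc]

lemma card_gapset {m k : ℕ} {M : Finset (ℕ × ℕ)} (hm : 2 ≤ m) (hM : M ∈ qfin (m - 2) k) :
    (gapset m M).card = m - 1 - 2 * k := by
  obtain ⟨hv, hk, hA, hL⟩ := mem_qfin.1 hM
  have hsub : (M.image (fun p => p.2 + 1) ∪ M.image (fun p => p.1)) ⊆ Finset.Icc 1 (m - 1) := by
    intro x hx
    simp only [Finset.mem_union, Finset.mem_image] at hx
    simp only [Finset.mem_Icc]
    rcases hx with ⟨p, hp, rfl⟩ | ⟨p, hp, rfl⟩ <;> · have := hv.1 p hp; omega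
  have hgap : gapset m M = Finset.Icc 1 (m - 1) \
      (M.image (fun p => p.2 + 1) ∪ M.image (fun p => p.1)) := by
    ext g
    simp only [gapset, Finset.mem_filter, Finset.mem_sdiff, Finset.mem_union, Finset.mem_image,
      not_or, not_exists, not_and]
  have hc1 : (M.image (fun p => p.2 + 1)).card = k := by
    rw [← hk]
    apply Finset.card_image_of_injOn
    intro p hp q hq h
    have h' : p.2 + 1 = q.2 + 1 := h
    rcases eq_or_ne p q with rfl | hne
    · rfl
    · have := hv.2 p hp q hq hne
      exfalso; omega
  have hc2 : (M.image (fun p => p.1)).card = k := by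
    rw [← hk]
    apply Finset.card_image_of_injOn
    intro p hp q hq h
    have h' : p.1 = q.1 := h
    rcases eq_or_ne p q with rfl | hne
    · rfl
    · have := hv.2 p hp q hq hne
      exfalso; omega
  have hdisj : Disjoint (M.image (fun p => p.2 + 1)) (M.image (fun p => p.1)) := by
    rw [Finset.disjoint_left]
    rintro x hx1 hx2
    simp only [Finset.mem_image] at hx1 hx2
    obtain ⟨p, hp, rfl⟩ := hx1
    obtain ⟨q, hq, hq2⟩ := hx2
    exact hA p hp q hq hq2.symm
  rw [hgap, Finset.card_sdiff_of_subset hsub, Finset.card_union_of_disjoint hdisj, hc1, hc2, Nat.card_Icc]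
  omega

lemma insA_mem {m k g : ℕ} {M : Finset (ℕ × ℕ)} (hm : 2 ≤ m) (hM : M ∈ qfin (m - 2) k)
    (hg : g ∈ gapset m M) : insA m g M ∈ qfin m (k + 1) := by
  obtain ⟨hv, hk, hA, hL⟩ := mem_qfin.1 hM
  obtain ⟨hg1, hg2, hg3⟩ := mem_gapset.1 hg
  have hvb := hv.1
  have hvd := hv.2
  rw [mem_qfin]
  refine ⟨⟨?_, ?_⟩, ?_, ?_, ?_⟩
  · -- bounds
    intro q hq
    rcases mem_insA.1 hq with rfl | ⟨p, hp, rfl⟩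
    · exact (⟨by omega, by omega, le_rfl⟩ : 1 ≤ g ∧ g < m ∧ m ≤ m)
    · have hb := hvb p hp
      show 1 ≤ grc g p.1 ∧ grc g p.1 < grc g p.2 ∧ grc g p.2 ≤ m
      unfold grc
      split_ifs <;> omega
  · -- distinct endpoints
    intro p hp q hq hne
    rcases mem_insA.1 hp with rfl | ⟨p', hp', rfl⟩ <;>
      rcases mem_insA.1 hq with rfl | ⟨q', hq', rfl⟩
    · exact absurd rfl hne
    · have hb := hvb q' hq'
      have h3 := hg3 q' hq'
      show g ≠ grc g q'.1 ∧ g ≠ grc g q'.2 ∧ m ≠ grc g q'.1 ∧ m ≠ grc g q'.2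
      unfold grc
      split_ifs <;> omega
    · have hb := hvb p' hp'
      have h3 := hg3 p' hp'
      show grc g p'.1 ≠ g ∧ grc g p'.1 ≠ m ∧ grc g p'.2 ≠ g ∧ grc g p'.2 ≠ m
      unfold grc
      split_ifs <;> omega
    · have hne' : p' ≠ q' := by rintro rfl; exact hne rfl
      have hd := hvd p' hp' q' hq' hne'
      have hb1 := hvb p' hp'
      have hb2 := hvb q' hq'
      show grc g p'.1 ≠ grc g q'.1 ∧ grc g p'.1 ≠ grc g q'.2 ∧
        grc g p'.2 ≠ grc g q'.1 ∧ grc g p'.2 ≠ grc g q'.2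
      unfold grc
      split_ifs <;> omega
  · -- card
    rw [insA, Finset.card_insert_of_notMem, Finset.card_image_of_injOn, hk]
    · intro p hp q hq h
      have h1 : grc g p.1 = grc g q.1 := congrArg Prod.fst h
      have h2 : grc g p.2 = grc g q.2 := congrArg Prod.snd h
      exact Prod.ext (grc_inj h1) (grc_inj h2)
    · intro hcon
      simp only [Finset.mem_image] at hcon
      obtain ⟨p, hp, hpe⟩ := hcon
      have hb := hvb p hp
      have h2 : grc g p.2 = m := congrArg Prod.snd hpe
      unfold grc at h2
      split_ifs at h2 <;> omega
  · -- no neighbor alignment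
    intro p hp q hq
    rcases mem_insA.1 hp with rfl | ⟨p', hp', rfl⟩ <;>
      rcases mem_insA.1 hq with rfl | ⟨q', hq', rfl⟩
    · exact (by omega : m + 1 ≠ g)
    · have hb := hvb q' hq'
      show m + 1 ≠ grc g q'.1
      unfold grc
      split_ifs <;> omega
    · have hb := hvb p' hp'
      have h2 := hg2 p' hp'
      show grc g p'.2 + 1 ≠ g
      unfold grc
      split_ifs <;> omega
    · rcases eq_or_ne p' q' with rfl | hne'
      · have hb := hvb p' hp'
        show grc g p'.2 + 1 ≠ grc g p'.1
        unfold grc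
        split_ifs <;> omega
      · have hd := hvd p' hp' q' hq' hne'
        have hAq := hA p' hp' q' hq'
        have hb1 := hvb p' hp'
        have hb2 := hvb q' hq'
        show grc g p'.2 + 1 ≠ grc g q'.1
        unfold grc
        split_ifs <;> omega
  · -- no left nesting
    intro p hp q hq h1 h2
    rcases mem_insA.1 hp with rfl | ⟨p', hp', rfl⟩ <;>
      rcases mem_insA.1 hq with rfl | ⟨q', hq', rfl⟩
    · have h1' : g + 1 = g := h1
      omega
    · have hb := hvb q' hq'
      have h3 := hg3 q' hq'
      have h1' : g + 1 = grc g q'.1 := h1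
      unfold grc at h1'
      split_ifs at h1' <;> omega
    · have hb := hvb p' hp'
      have h2' : m < grc g p'.2 := h2
      unfold grc at h2'
      split_ifs at h2' <;> omega
    · rcases eq_or_ne p' q' with rfl | hne'
      · have h2' : grc g p'.2 < grc g p'.2 := h2
        omega
      · have hd := hvd p' hp' q' hq' hne'
        have hb1 := hvb p' hp'
        have hb2 := hvb q' hq'
        have h2' : grc g q'.2 < grc g p'.2 := h2
        have hq2p2 : q'.2 < p'.2 := grc_lt.1 h2'
        have h1' : grc g p'.1 + 1 = grc g q'.1 := h1
        have h11 : p'.1 + 1 = q'.1 := by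
          unfold grc at h1'
          split_ifs at h1' <;> omega
        exact hL p' hp' q' hq' h11 hq2p2

lemma lep_eq {m k i : ℕ} {M : Finset (ℕ × ℕ)} (hM : M ∈ qfin m k) (hi : (i, m) ∈ M) :
    lep m M = i := by
  obtain ⟨hv, -, -⟩ := mem_qfin.1 hM
  apply le_antisymm
  · apply Finset.sup_le
    intro q hq
    rcases eq_or_ne q (i, m) with rfl | hne
    · simp
    · have := hv.2 q hq (i, m) hi hne
      show (if q.2 = m then q.1 else 0) ≤ i
      split_ifs with h
      · exact absurd h this.2.2.2
      · exact Nat.zero_le i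
  · have := Finset.le_sup (f := fun q : ℕ × ℕ => if q.2 = m then q.1 else 0) hi
    simpa [lep] using this

lemma del_spec {m k i : ℕ} {M : Finset (ℕ × ℕ)} (hm : 2 ≤ m) (hM : M ∈ qfin m k)
    (hi : (i, m) ∈ M) :
    delA m M ∈ qfin (m - 2) (k - 1) ∧ i ∈ gapset m (delA m M) ∧ insA m i (delA m M) = M := by
  obtain ⟨hv, hk, hA, hL⟩ := mem_qfin.1 hM
  have hbi : 1 ≤ i ∧ i < m ∧ m ≤ m := hv.1 (i, m) hi
  have hfilter : M.filter (fun p => p.2 ≠ m) = M.erase (i, m) := by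
    ext p
    simp only [Finset.mem_filter, Finset.mem_erase]
    constructor
    · rintro ⟨hp, h2⟩
      exact ⟨fun hcon => h2 (by rw [hcon]), hp⟩
    · rintro ⟨hne, hp⟩
      exact ⟨hp, (hv.2 p hp (i, m) hi hne).2.2.2⟩
  have hdelA : delA m M = (M.erase (i, m)).image (shr i) := by
    rw [delA, lep_eq hM hi, hfilter]
  have hfacts : ∀ p ∈ M.erase (i, m), 1 ≤ p.1 ∧ p.1 < p.2 ∧ p.2 ≤ m - 1 ∧
      p.1 ≠ i ∧ p.2 ≠ i ∧ p.1 ≠ m ∧ p.2 ≠ m := by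
    intro p hp
    rw [Finset.mem_erase] at hp
    have hb := hv.1 p hp.2
    have hd : p.1 ≠ i ∧ p.1 ≠ m ∧ p.2 ≠ i ∧ p.2 ≠ m := hv.2 p hp.2 (i, m) hi hp.1
    omega
  have hmemN : delA m M ∈ qfin (m - 2) (k - 1) := by
    rw [hdelA, mem_qfin]
    refine ⟨⟨?_, ?_⟩, ?_, ?_, ?_⟩
    · intro q hq
      obtain ⟨p, hp, rfl⟩ := Finset.mem_image.1 hq
      have hf := hfacts p hp
      show 1 ≤ shc i p.1 ∧ shc i p.1 < shc i p.2 ∧ shc i p.2 ≤ m - 2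
      unfold shc
      split_ifs <;> omega
    · intro p hp q hq hne
      obtain ⟨p', hp', rfl⟩ := Finset.mem_image.1 hp
      obtain ⟨q', hq', rfl⟩ := Finset.mem_image.1 hq
      have hne' : p' ≠ q' := by rintro rfl; exact hne rfl
      have hf1 := hfacts p' hp'
      have hf2 := hfacts q' hq'
      have hd := hv.2 p' (Finset.mem_of_mem_erase hp') q' (Finset.mem_of_mem_erase hq') hne'
      show shc i p'.1 ≠ shc i q'.1 ∧ shc i p'.1 ≠ shc i q'.2 ∧
        shc i p'.2 ≠ shc i q'.1 ∧ shc i p'.2 ≠ shc i q'.2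
      unfold shc
      split_ifs <;> omega
    · rw [Finset.card_image_of_injOn, Finset.card_erase_of_mem hi, hk]
      intro p hp q hq h
      have hf1 := hfacts p hp
      have hf2 := hfacts q hq
      have h1 : shc i p.1 = shc i q.1 := congrArg Prod.fst h
      have h2 : shc i p.2 = shc i q.2 := congrArg Prod.snd h
      unfold shc at h1 h2
      refine Prod.ext ?_ ?_ <;> split_ifs at h1 h2 <;> omega
    · intro p hp q hq
      obtain ⟨p', hp', rfl⟩ := Finset.mem_image.1 hp
      obtain ⟨q', hq', rfl⟩ := Finset.mem_image.1 hq
      have hf1 := hfacts p' hp'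
      have hf2 := hfacts q' hq'
      have hApq := hA p' (Finset.mem_of_mem_erase hp') q' (Finset.mem_of_mem_erase hq')
      have hAim : p'.2 + 1 ≠ i := hA p' (Finset.mem_of_mem_erase hp') (i, m) hi
      rcases eq_or_ne p' q' with rfl | hne'
      · show shc i p'.2 + 1 ≠ shc i p'.1
        unfold shc
        split_ifs <;> omega
      · have hd := hv.2 p' (Finset.mem_of_mem_erase hp') q' (Finset.mem_of_mem_erase hq') hne'
        show shc i p'.2 + 1 ≠ shc i q'.1
        unfold shc
        split_ifs <;> omega
    · intro p hp q hq h1 h2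
      obtain ⟨p', hp', rfl⟩ := Finset.mem_image.1 hp
      obtain ⟨q', hq', rfl⟩ := Finset.mem_image.1 hq
      have hf1 := hfacts p' hp'
      have hf2 := hfacts q' hq'
      rcases eq_or_ne p' q' with rfl | hne'
      · have h2' : shc i p'.2 < shc i p'.2 := h2
        omega
      · have hd := hv.2 p' (Finset.mem_of_mem_erase hp') q' (Finset.mem_of_mem_erase hq') hne'
        have h2' : shc i q'.2 < shc i p'.2 := h2
        have hq2 : q'.2 < p'.2 := (shc_lt hf2.2.2.2.2.1 hf1.2.2.2.2.1).1 h2'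
        have h1' : shc i p'.1 + 1 = shc i q'.1 := h1
        unfold shc at h1'
        split_ifs at h1'
        · exact hL p' (Finset.mem_of_mem_erase hp') q' (Finset.mem_of_mem_erase hq')
            (by omega) hq2
        · have hqi : i + 1 = q'.1 := by omega
          exact hL (i, m) hi q' (Finset.mem_of_mem_erase hq')
            (show (i, m).1 + 1 = q'.1 from hqi) (show q'.2 < (i, m).2 by omega)
        · omega
        · exact hL p' (Finset.mem_of_mem_erase hp') q' (Finset.mem_of_mem_erase hq')
            (by omega) hq2
  refine ⟨hmemN, ?_, ?_⟩
  · rw [hdelA, mem_gapset]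
    refine ⟨by omega, ?_, ?_⟩
    · intro q hq
      obtain ⟨p', hp', rfl⟩ := Finset.mem_image.1 hq
      have hf := hfacts p' hp'
      have hAim : p'.2 + 1 ≠ i := hA p' (Finset.mem_of_mem_erase hp') (i, m) hi
      show shc i p'.2 + 1 ≠ i
      unfold shc
      split_ifs <;> omega
    · intro q hq
      obtain ⟨p', hp', rfl⟩ := Finset.mem_image.1 hq
      have hf := hfacts p' hp'
      show shc i p'.1 ≠ i
      unfold shc
      split_ifs with hcase
      · omega
      · intro hcon
        have hqi : (i, m).1 + 1 = p'.1 := by show i + 1 = p'.1; omega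
        exact hL (i, m) hi p' (Finset.mem_of_mem_erase hp') hqi
          (show p'.2 < (i, m).2 by show p'.2 < m; omega)
  · rw [hdelA, insA, Finset.image_image]
    have hcomp : ∀ p ∈ M.erase (i, m), (gro i ∘ shr i) p = p := by
      intro p hp
      have hf := hfacts p hp
      have e1 : (gro i ∘ shr i) p = (grc i (shc i p.1), grc i (shc i p.2)) := rfl
      rw [e1]
      refine Prod.ext ?_ ?_ <;> show _ = _
      · show grc i (shc i p.1) = p.1
        unfold grc shc
        split_ifs <;> omega
      · show grc i (shc i p.2) = p.2
        unfold grc shc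
        split_ifs <;> omega
    rw [Finset.image_congr (fun p hp => hcomp p hp), Finset.image_id']
    exact Finset.insert_erase hi

lemma del_insA {m k g : ℕ} {M : Finset (ℕ × ℕ)} (hm : 2 ≤ m) (hM : M ∈ qfin (m - 2) k)
    (hg : g ∈ gapset m M) : delA m (insA m g M) = M := by
  obtain ⟨hv, hk, hA, hL⟩ := mem_qfin.1 hM
  have hins := insA_mem hm hM hg
  have hgm : (g, m) ∈ insA m g M := Finset.mem_insert_self _ _
  have hlep : lep m (insA m g M) = g := lep_eq hins hgm
  have hfil : (insA m g M).filter (fun p => p.2 ≠ m) = M.image (gro g) := by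
    rw [insA, Finset.filter_insert]
    rw [if_neg (by simp)]
    apply Finset.filter_true_of_mem
    intro p hp
    obtain ⟨q, hq, rfl⟩ := Finset.mem_image.1 hp
    have := hv.1 q hq
    show grc g q.2 ≠ m
    unfold grc
    split_ifs <;> omega
  rw [delA, hlep, hfil, Finset.image_image]
  have hcomp : ∀ p ∈ M, (shr g ∘ gro g) p = p := by
    intro p hp
    refine Prod.ext ?_ ?_
    · show shc g (grc g p.1) = p.1
      unfold grc shc
      split_ifs <;> omega
    · show shc g (grc g p.2) = p.2
      unfold grc shc
      split_ifs <;> omega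
  rw [Finset.image_congr (fun p hp => hcomp p hp), Finset.image_id']

lemma qfin_rec {m k : ℕ} (hm : 2 ≤ m) (hk : 1 ≤ k) :
    (qfin m k).card = (qfin (m - 1) k).card + (m - 1 - 2 * (k - 1)) * (qfin (m - 2) (k - 1)).card := by
  have hsplit := Finset.card_filter_add_card_filter_not
    (s := qfin m k) (p := fun M => ∀ p ∈ M, p.2 ≠ m)
  have hApart : (qfin m k).filter (fun M => ∀ p ∈ M, p.2 ≠ m) = qfin (m - 1) k := by
    ext M
    simp only [Finset.mem_filter, mem_qfin]
    constructor
    · rintro ⟨⟨hv, hk', hav⟩, htop⟩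
      refine ⟨⟨?_, hv.2⟩, hk', hav⟩
      intro p hp
      have := hv.1 p hp
      have := htop p hp
      omega
    · rintro ⟨⟨hv, hd⟩, hk', hav⟩
      refine ⟨⟨⟨?_, hd⟩, hk', hav⟩, ?_⟩
      · intro p hp
        have := hv p hp
        omega
      · intro p hp
        have := hv p hp
        omega
  have hBcard : ((qfin m k).filter (fun M => ¬ ∀ p ∈ M, p.2 ≠ m)).card
      = (m - 1 - 2 * (k - 1)) * (qfin (m - 2) (k - 1)).card := by
    set B := (qfin m k).filter (fun M => ¬ ∀ p ∈ M, p.2 ≠ m) with hB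
    have hBmem : ∀ M ∈ B, ∃ i, (i, m) ∈ M := by
      intro M hM
      rw [hB, Finset.mem_filter] at hM
      obtain ⟨hq, hex⟩ := hM
      push_neg at hex
      obtain ⟨p, hp, hp2⟩ := hex
      exact ⟨p.1, by rw [show (p.1, m) = p from Prod.ext rfl hp2.symm]; exact hp⟩
    have hmap : ∀ M ∈ B, delA m M ∈ qfin (m - 2) (k - 1) := by
      intro M hM
      obtain ⟨i, hi⟩ := hBmem M hM
      exact (del_spec hm (Finset.mem_filter.1 hM).1 hi).1
    rw [Finset.card_eq_sum_card_fiberwise hmap]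
    have hfib : ∀ M' ∈ qfin (m - 2) (k - 1),
        (B.filter fun M => delA m M = M').card = m - 1 - 2 * (k - 1) := by
      intro M' hM'
      have himg : B.filter (fun M => delA m M = M')
          = (gapset m M').image (fun g => insA m g M') := by
        ext M
        simp only [Finset.mem_filter, Finset.mem_image]
        constructor
        · rintro ⟨hMB, hdel⟩
          obtain ⟨i, hi⟩ := hBmem M hMB
          obtain ⟨h1, h2, h3⟩ := del_spec hm (Finset.mem_filter.1 hMB).1 hi
          rw [hdel] at h2 h3
          exact ⟨i, h2, h3⟩
        · rintro ⟨g, hg, rfl⟩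
          have h1 := insA_mem hm hM' hg
          rw [Nat.sub_add_cancel hk] at h1
          refine ⟨Finset.mem_filter.2 ⟨h1, ?_⟩, del_insA hm hM' hg⟩
          push_neg
          exact ⟨(g, m), Finset.mem_insert_self _ _, rfl⟩
      rw [himg, Finset.card_image_of_injOn, card_gapset hm hM']
      intro g hg g' hg' h
      have h' : insA m g M' = insA m g' M' := h
      have hgm : (g, m) ∈ insA m g' M' := by
        rw [← h']
        exact Finset.mem_insert_self _ _
      rcases mem_insA.1 hgm with he | ⟨p, hp, hpe⟩
      · exact (Prod.ext_iff.1 he).1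
      · obtain ⟨hv', -, -⟩ := mem_qfin.1 hM'
        have := hv'.1 p hp
        have h2 : grc g' p.2 = m := congrArg Prod.snd hpe
        unfold grc at h2
        exfalso
        split_ifs at h2 <;> omega
    rw [Finset.sum_congr rfl hfib, Finset.sum_const, smul_eq_mul, Nat.mul_comm]
  rw [← hsplit, hApart, hBcard]

lemma qnum_rec {m k : ℕ} (hm : 2 ≤ m) (hk : 1 ≤ k) :
    Qnum m k = Qnum (m - 1) k + (m - 1 - 2 * (k - 1)) * Qnum (m - 2) (k - 1) := by
  rw [qnum_eq_card, qnum_eq_card, qnum_eq_card, qfin_rec hm hk]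

lemma qnum_zero (m : ℕ) : Qnum m 0 = 1 := by
  rw [qnum_eq_card]
  have : qfin m 0 = {∅} := by
    ext M
    rw [mem_qfin, Finset.mem_singleton]
    constructor
    · rintro ⟨-, hc, -⟩
      exact Finset.card_eq_zero.1 hc
    · rintro rfl
      refine ⟨⟨?_, ?_⟩, rfl, ?_, ?_⟩ <;> simp
  rw [this, Finset.card_singleton]

lemma qnum_vanish {m k : ℕ} (h : m < 2 * k) : Qnum m k = 0 := by
  rw [qnum_eq_card, Finset.card_eq_zero]
  rw [Finset.eq_empty_iff_forall_notMem]
  intro M hM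
  have := card_le_of_mem_qfin hM
  omega

end AuxQ

open Polynomial in
lemma coeff_gpoly (n k : ℕ) : (gpoly n).coeff k = (Qnum (n - 1) k : ℤ) := by
  rw [gpoly, Polynomial.finset_sum_coeff]
  simp only [Polynomial.coeff_C_mul, Polynomial.coeff_X_pow, mul_ite, mul_one, mul_zero]
  rw [Finset.sum_ite_eq (Finset.range ((n - 1) / 2 + 1)) k (fun j => (Qnum (n - 1) j : ℤ))]
  split_ifs with h
  · rfl
  · rw [Finset.mem_range, not_lt] at h
    rw [AuxQ.qnum_vanish (by omega)]
    simp


open Polynomial in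
/-- Recurrence for the polynomials `g_n(y) = ∑_k Q(n-1,k) y^k`. -/
theorem stmt_7 (n : ℕ) (hn : 3 ≤ n) :
    gpoly n = gpoly (n - 1) + Polynomial.C ((n : ℤ) - 2) * Polynomial.X * gpoly (n - 2)
      - 2 * Polynomial.X ^ 2 * Polynomial.derivative (gpoly (n - 2)) := by
  obtain ⟨j, rfl⟩ : ∃ j, n = j + 3 := ⟨n - 3, by omega⟩
  rw [show j + 3 - 1 = j + 2 from rfl, show j + 3 - 2 = j + 1 from rfl]
  have hC2 : (2 : Polynomial ℤ) * Polynomial.X ^ 2 * Polynomial.derivative (gpoly (j + 1))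
      = Polynomial.derivative (gpoly (j + 1)) * Polynomial.X ^ 2 * Polynomial.C 2 := by
    rw [map_ofNat]; ring
  apply Polynomial.ext
  intro k
  rw [Polynomial.coeff_sub, Polynomial.coeff_add, hC2, Polynomial.coeff_mul_C,
    Polynomial.coeff_mul_X_pow', mul_assoc, Polynomial.coeff_C_mul, Polynomial.X_mul,
    coeff_gpoly (j + 3) k, coeff_gpoly (j + 2) k,
    show j + 3 - 1 = j + 2 from rfl, show j + 2 - 1 = j + 1 from rfl]
  rcases k with _ | k'
  · rw [if_neg (by omega), Polynomial.coeff_mul_X_zero]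
    simp [AuxQ.qnum_zero]
  · rw [Polynomial.coeff_mul_X, coeff_gpoly (j + 1) k', show j + 1 - 1 = j from rfl]
    have hrec := AuxQ.qnum_rec (m := j + 2) (k := k' + 1) (by omega) (by omega)
    rw [show j + 2 - 1 = j + 1 from rfl, show j + 2 - 2 = j from rfl,
      show k' + 1 - 1 = k' from rfl] at hrec
    rcases k' with _ | k''
    · rw [if_neg (by omega)]
      rw [AuxQ.qnum_zero] at hrec ⊢
      simp only [Nat.mul_zero, Nat.sub_zero, mul_one, zero_add] at hrec ⊢
      push_cast
      omega
    · rw [if_pos (by omega), show k'' + 1 + 1 - 2 = k'' from rfl, Polynomial.coeff_derivative,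
        coeff_gpoly (j + 1) (k'' + 1), show j + 1 - 1 = j from rfl]
      by_cases hc : Qnum j (k'' + 1) = 0
      · rw [hc] at hrec ⊢
        simp only [Nat.mul_zero, Nat.add_zero, mul_zero] at hrec
        push_cast
        simp only [mul_zero, zero_mul, add_zero, sub_zero]
        exact_mod_cast congrArg (Nat.cast : ℕ → ℤ) hrec
      · have hb : 2 * (k'' + 1) ≤ j := by
          by_contra hcon
          exact hc (AuxQ.qnum_vanish (by omega))
        zify [show 2 * (k'' + 1) ≤ j + 1 by omega] at hrec
        rw [hrec]
        push_cast
        ring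
end
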